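/- arXiv:2506.15800 — 7 statements merged into one kernel-verified Lean document; each statement's English description precedes it below -/
import Mathlib

section
/- For every n ≥ 1, the number of permutations of {1,...,n} avoiding both the pattern 321 and the pattern 4123 equals the Fibonacci number F_{2n-1}. -/
open Equiv Fin

/-- `σ` avoids the pattern 321: no indices `i < j < k` with `σ i > σ j > σ k`. -/
def Avoids321 {n : ℕ} (σ : Equiv.Perm (Fin n)) : Prop :=
  ¬ ∃ i j k : Fin n, i < j ∧ j < k ∧ σ k < σ j ∧ σ j < σ i

/-- `σ` avoids the pattern 4123: no indices `i < j < k < l` with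
`σ j < σ k < σ l < σ i`. -/
def Avoids4123 {n : ℕ} (σ : Equiv.Perm (Fin n)) : Prop :=
  ¬ ∃ i j k l : Fin n, i < j ∧ j < k ∧ k < l ∧ σ j < σ k ∧ σ k < σ l ∧ σ l < σ i

namespace AvAux

variable {m : ℕ}

/-- insert value `p` at the front of `τ` (values ≥ p shifted up). -/
def ins (p : Fin (m+1)) (τ : Equiv.Perm (Fin m)) : Equiv.Perm (Fin (m+1)) :=
  ((finSuccEquiv' 0).trans ((Equiv.optionCongr τ).trans (finSuccEquiv' p).symm))

@[simp] lemma ins_zero (p : Fin (m+1)) (τ : Equiv.Perm (Fin m)) : ins p τ 0 = p := by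
  simp [ins, finSuccEquiv'_at]

@[simp] lemma ins_succ (p : Fin (m+1)) (τ : Equiv.Perm (Fin m)) (i : Fin m) :
    ins p τ i.succ = p.succAbove (τ i) := by
  have h : finSuccEquiv' (0 : Fin (m+1)) i.succ = some i := by
    simpa using finSuccEquiv'_succAbove (0 : Fin (m+1)) i
  simp [ins, h]

lemma succAbove_lt_self_iff (p : Fin (m+1)) (i : Fin m) :
    p.succAbove i < p ↔ i.castSucc < p := by
  rcases lt_or_ge i.castSucc p with h | h
  · rw [succAbove_of_castSucc_lt _ _ h]
  · rw [succAbove_of_le_castSucc _ _ h]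
    exact iff_of_false (h.trans_lt (castSucc_lt_succ (i := i))).asymm h.not_gt


lemma avoids321_ins (p : Fin (m+1)) (τ : Equiv.Perm (Fin m)) :
    Avoids321 (ins p τ) ↔ Avoids321 τ ∧
      ¬ ∃ j k : Fin m, j < k ∧ τ k < τ j ∧ (τ j).castSucc < p := by
  constructor
  · intro h
    refine ⟨fun ⟨i, j, k, hij, hjk, h1, h2⟩ => h ?_, fun ⟨j, k, hjk, h1, h2⟩ => h ?_⟩
    · exact ⟨i.succ, j.succ, k.succ, succ_lt_succ_iff.2 hij, succ_lt_succ_iff.2 hjk,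
        by simpa [succAbove_lt_succAbove_iff] using h1,
        by simpa [succAbove_lt_succAbove_iff] using h2⟩
    · refine ⟨0, j.succ, k.succ, j.succ_pos, succ_lt_succ_iff.2 hjk,
        by simpa [succAbove_lt_succAbove_iff] using h1, ?_⟩
      simpa [succAbove_lt_self_iff] using h2
  · rintro ⟨h1, h2⟩ ⟨i, j, k, hij, hjk, ha, hb⟩
    rcases Fin.eq_zero_or_eq_succ k with rfl | ⟨k', rfl⟩
    · exact absurd hjk (Fin.not_lt_zero _)
    rcases Fin.eq_zero_or_eq_succ j with rfl | ⟨j', rfl⟩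
    · exact absurd hij (Fin.not_lt_zero _)
    rcases Fin.eq_zero_or_eq_succ i with rfl | ⟨i', rfl⟩
    · refine h2 ⟨j', k', succ_lt_succ_iff.1 hjk,
        by simpa [succAbove_lt_succAbove_iff] using ha, ?_⟩
      rw [← succAbove_lt_self_iff p (τ j')]
      simpa using hb
    · exact h1 ⟨i', j', k', succ_lt_succ_iff.1 hij, succ_lt_succ_iff.1 hjk,
        by simpa [succAbove_lt_succAbove_iff] using ha,
        by simpa [succAbove_lt_succAbove_iff] using hb⟩

lemma avoids4123_ins (p : Fin (m+1)) (τ : Equiv.Perm (Fin m)) :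
    Avoids4123 (ins p τ) ↔ Avoids4123 τ ∧
      ¬ ∃ j k l : Fin m, j < k ∧ k < l ∧ τ j < τ k ∧ τ k < τ l ∧ (τ l).castSucc < p := by
  constructor
  · intro h
    refine ⟨fun ⟨i, j, k, l, hij, hjk, hkl, h1, h2, h3⟩ => h ?_,
      fun ⟨j, k, l, hjk, hkl, h1, h2, h3⟩ => h ?_⟩
    · exact ⟨i.succ, j.succ, k.succ, l.succ, succ_lt_succ_iff.2 hij, succ_lt_succ_iff.2 hjk,
        succ_lt_succ_iff.2 hkl,
        by simpa [succAbove_lt_succAbove_iff] using h1,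
        by simpa [succAbove_lt_succAbove_iff] using h2,
        by simpa [succAbove_lt_succAbove_iff] using h3⟩
    · refine ⟨0, j.succ, k.succ, l.succ, j.succ_pos, succ_lt_succ_iff.2 hjk,
        succ_lt_succ_iff.2 hkl,
        by simpa [succAbove_lt_succAbove_iff] using h1,
        by simpa [succAbove_lt_succAbove_iff] using h2, ?_⟩
      simpa [succAbove_lt_self_iff] using h3
  · rintro ⟨h1, h2⟩ ⟨i, j, k, l, hij, hjk, hkl, ha, hb, hc⟩
    rcases Fin.eq_zero_or_eq_succ l with rfl | ⟨l', rfl⟩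
    · exact absurd hkl (Fin.not_lt_zero _)
    rcases Fin.eq_zero_or_eq_succ k with rfl | ⟨k', rfl⟩
    · exact absurd hjk (Fin.not_lt_zero _)
    rcases Fin.eq_zero_or_eq_succ j with rfl | ⟨j', rfl⟩
    · exact absurd hij (Fin.not_lt_zero _)
    rcases Fin.eq_zero_or_eq_succ i with rfl | ⟨i', rfl⟩
    · refine h2 ⟨j', k', l', succ_lt_succ_iff.1 hjk, succ_lt_succ_iff.1 hkl,
        by simpa [succAbove_lt_succAbove_iff] using ha,
        by simpa [succAbove_lt_succAbove_iff] using hb, ?_⟩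
      rw [← succAbove_lt_self_iff p (τ l')]
      simpa using hc
    · exact h1 ⟨i', j', k', l', succ_lt_succ_iff.1 hij, succ_lt_succ_iff.1 hjk,
        succ_lt_succ_iff.1 hkl,
        by simpa [succAbove_lt_succAbove_iff] using ha,
        by simpa [succAbove_lt_succAbove_iff] using hb,
        by simpa [succAbove_lt_succAbove_iff] using hc⟩


def Av {k : ℕ} (σ : Equiv.Perm (Fin k)) : Prop := Avoids321 σ ∧ Avoids4123 σ

lemma vone : ((1 : Fin (m+2)) : ℕ) = 1 := rfl

lemma vtwo : ((2 : Fin (m+3)) : ℕ) = 2 := by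
  show 2 % (m+3) = 2
  exact Nat.mod_eq_of_lt (by omega)

lemma av_ins0 (τ : Equiv.Perm (Fin m)) : Av (ins 0 τ) ↔ Av τ := by
  unfold Av
  rw [avoids321_ins, avoids4123_ins]
  have h0 : ∀ x : Fin m, ¬ (x.castSucc < (0 : Fin (m+1))) := fun x => Fin.not_lt_zero _
  constructor
  · rintro ⟨⟨a, _⟩, ⟨b, _⟩⟩; exact ⟨a, b⟩
  · rintro ⟨a, b⟩
    exact ⟨⟨a, fun ⟨j, k, _, _, hc⟩ => h0 _ hc⟩, ⟨b, fun ⟨j, k, l, _, _, _, _, hc⟩ => h0 _ hc⟩⟩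

lemma av_ins1 (τ : Equiv.Perm (Fin (m+1))) : Av (ins 1 τ) ↔ Av τ := by
  unfold Av
  rw [avoids321_ins, avoids4123_ins]
  have hval : ((1 : Fin (m+2)) : ℕ) = 1 := vone
  constructor
  · rintro ⟨⟨a, _⟩, ⟨b, _⟩⟩; exact ⟨a, b⟩
  · rintro ⟨a, b⟩
    refine ⟨⟨a, fun ⟨j, k, _, hv, hc⟩ => ?_⟩, ⟨b, fun ⟨j, k, l, _, _, _, hv, hc⟩ => ?_⟩⟩
    · have h1 : ((τ j : Fin (m+1)) : ℕ) < 1 := by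
        simpa [Fin.lt_def, hval] using hc
      have h2 : ((τ k : Fin (m+1)) : ℕ) < (τ j : ℕ) := hv
      omega
    · have h1 : ((τ l : Fin (m+1)) : ℕ) < 1 := by
        simpa [Fin.lt_def, hval] using hc
      have h2 : ((τ k : Fin (m+1)) : ℕ) < (τ l : ℕ) := hv
      omega

lemma av_ins2 (τ : Equiv.Perm (Fin (m+2))) :
    Av (ins 2 τ) ↔ Av τ ∧ τ⁻¹ 0 < τ⁻¹ 1 := by
  unfold Av
  rw [avoids321_ins, avoids4123_ins]
  have hval : ((2 : Fin (m+3)) : ℕ) = 2 := vtwo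
  have hlt2 : ∀ x : Fin (m+2), x.castSucc < (2 : Fin (m+3)) ↔ (x : ℕ) < 2 := by
    intro x; rw [Fin.lt_def, hval]; rfl
  constructor
  · rintro ⟨⟨a, ha⟩, ⟨b, _⟩⟩
    refine ⟨⟨a, b⟩, ?_⟩
    rcases lt_trichotomy (τ⁻¹ 0) (τ⁻¹ 1) with h | h | h
    · exact h
    · exact absurd (τ⁻¹.injective h) (by simp [Fin.ext_iff])
    · refine absurd ⟨τ⁻¹ 1, τ⁻¹ 0, h, ?_, ?_⟩ ha
      · rw [(Equiv.Perm.eq_inv_iff_eq.mp rfl), (Equiv.Perm.eq_inv_iff_eq.mp rfl), Fin.lt_def, vone]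
        simp
      · rw [(Equiv.Perm.eq_inv_iff_eq.mp rfl), hlt2, vone]
        omega
  · rintro ⟨⟨a, b⟩, hpos⟩
    refine ⟨⟨a, fun ⟨j, k, hjk, hv, hc⟩ => ?_⟩, ⟨b, fun ⟨j, k, l, _, _, hv1, hv2, hc⟩ => ?_⟩⟩
    · have h1 : ((τ j : Fin (m+2)) : ℕ) < 2 := (hlt2 _).1 hc
      have h2 : ((τ k : Fin (m+2)) : ℕ) < (τ j : ℕ) := hv
      have hj : τ j = 1 := by
        apply Fin.ext; rw [vone]; omega
      have hk : τ k = 0 := by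
        apply Fin.ext; simp only [Fin.val_zero]; omega
      have : τ⁻¹ 1 < τ⁻¹ 0 := by
        rwa [← hj, ← hk, (Equiv.Perm.inv_eq_iff_eq.mpr rfl), (Equiv.Perm.inv_eq_iff_eq.mpr rfl)]
      exact absurd hpos this.asymm
    · have h1 : ((τ l : Fin (m+2)) : ℕ) < 2 := (hlt2 _).1 hc
      have h2 : ((τ k : Fin (m+2)) : ℕ) < (τ l : ℕ) := hv2
      have h3 : ((τ j : Fin (m+2)) : ℕ) < (τ k : ℕ) := hv1
      omega

lemma not_av_ins_big {k : ℕ} (p : Fin (k+1)) (hp : 3 ≤ (p : ℕ)) (τ : Equiv.Perm (Fin k)) :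
    ¬ Av (ins p τ) := by
  have hk : 3 ≤ k := by have := p.isLt; omega
  obtain ⟨z0, hv0⟩ : ∃ z : Fin k, (z : ℕ) = 0 := ⟨⟨0, by omega⟩, rfl⟩
  obtain ⟨z1, hv1⟩ : ∃ z : Fin k, (z : ℕ) = 1 := ⟨⟨1, by omega⟩, rfl⟩
  obtain ⟨z2, hv2⟩ : ∃ z : Fin k, (z : ℕ) = 2 := ⟨⟨2, by omega⟩, rfl⟩
  unfold Av
  rw [avoids321_ins, avoids4123_ins]
  rintro ⟨⟨_, h321⟩, ⟨_, h4123⟩⟩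
  have e0 : τ (τ⁻¹ z0) = z0 := Equiv.Perm.eq_inv_iff_eq.mp rfl
  have e1 : τ (τ⁻¹ z1) = z1 := Equiv.Perm.eq_inv_iff_eq.mp rfl
  have e2 : τ (τ⁻¹ z2) = z2 := Equiv.Perm.eq_inv_iff_eq.mp rfl
  have hlt : ∀ x : Fin k, (x : ℕ) < 3 → x.castSucc < p := by
    intro x hx; rw [Fin.lt_def]; exact lt_of_lt_of_le hx hp
  have v01 : z0 < z1 := by rw [Fin.lt_def, hv0, hv1]; omega
  have v12 : z1 < z2 := by rw [Fin.lt_def, hv1, hv2]; omega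
  have n01 : τ⁻¹ z0 ≠ τ⁻¹ z1 := fun h => absurd (congrArg τ h) (by rw [e0, e1]; exact v01.ne)
  have n12 : τ⁻¹ z1 ≠ τ⁻¹ z2 := fun h => absurd (congrArg τ h) (by rw [e1, e2]; exact v12.ne)
  rcases lt_or_ge (τ⁻¹ z1) (τ⁻¹ z0) with h10 | h01
  · exact h321 ⟨τ⁻¹ z1, τ⁻¹ z0, h10, by rw [e0, e1]; exact v01,
      hlt _ (by rw [e1, hv1]; omega)⟩
  · have h01' : τ⁻¹ z0 < τ⁻¹ z1 := lt_of_le_of_ne h01 n01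
    rcases lt_or_ge (τ⁻¹ z2) (τ⁻¹ z1) with h21 | h12
    · exact h321 ⟨τ⁻¹ z2, τ⁻¹ z1, h21, by rw [e1, e2]; exact v12,
        hlt _ (by rw [e2, hv2]; omega)⟩
    · have h12' : τ⁻¹ z1 < τ⁻¹ z2 := lt_of_le_of_ne h12 n12
      exact h4123 ⟨τ⁻¹ z0, τ⁻¹ z1, τ⁻¹ z2, h01', h12', by rw [e0, e1]; exact v01,
        by rw [e1, e2]; exact v12, hlt _ (by rw [e2, hv2]; omega)⟩

lemma ins_bijective {k : ℕ} :
    Function.Bijective (fun x : Fin (k+1) × Equiv.Perm (Fin k) => ins x.1 x.2) := by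
  rw [Fintype.bijective_iff_injective_and_card]
  refine ⟨?_, by simp [Fintype.card_perm, Nat.factorial_succ]⟩
  rintro ⟨p, τ⟩ ⟨q, ρ⟩ h
  have h0 : p = q := by
    have := DFunLike.congr_fun h (0 : Fin (k+1))
    simpa using this
  subst h0
  have hτ : τ = ρ := by
    ext i
    have := DFunLike.congr_fun h i.succ
    simp only [ins_succ] at this
    exact congrArg Fin.val ((strictMono_succAbove p).injective this)
  rw [hτ]

lemma card_split {k : ℕ} (Q : Equiv.Perm (Fin (k+1)) → Prop) :
    Nat.card {σ : Equiv.Perm (Fin (k+1)) // Q σ} =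
      ∑ p : Fin (k+1), Nat.card {τ : Equiv.Perm (Fin k) // Q (ins p τ)} := by
  classical
  have e1 : {x : Fin (k+1) × Equiv.Perm (Fin k) // Q (ins x.1 x.2)} ≃
      {σ : Equiv.Perm (Fin (k+1)) // Q σ} :=
    (Equiv.ofBijective _ ins_bijective).subtypeEquiv (fun x => Iff.rfl)
  have e2 : {x : Fin (k+1) × Equiv.Perm (Fin k) // Q (ins x.1 x.2)} ≃
      Σ p : Fin (k+1), {τ : Equiv.Perm (Fin k) // Q (ins p τ)} :=
    Equiv.subtypeProdEquivSigmaSubtype (fun p τ => Q (ins p τ))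
  rw [← Nat.card_congr e1, Nat.card_congr e2]
  simp [Nat.card_eq_fintype_card, Fintype.card_sigma]

/-- number of avoiding permutations of size `k` -/
noncomputable def a (k : ℕ) : ℕ := Nat.card {σ : Equiv.Perm (Fin k) // Av σ}

/-- number of avoiding permutations of size `k+2` with `0` before `1` -/
noncomputable def d (k : ℕ) : ℕ :=
  Nat.card {σ : Equiv.Perm (Fin (k+2)) // Av σ ∧ σ⁻¹ 0 < σ⁻¹ 1}


lemma fiber_card_eq {k : ℕ} {P : Equiv.Perm (Fin (k+1)) → Prop} {C : Equiv.Perm (Fin k) → Prop}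
    (p : Fin (k+1)) (h : ∀ τ, P (ins p τ) ↔ C τ) :
    Nat.card {τ : Equiv.Perm (Fin k) // P (ins p τ)} = Nat.card {τ // C τ} :=
  Nat.card_congr (Equiv.subtypeEquivRight h)

lemma a_rec (m : ℕ) : a (m+3) = a (m+2) + a (m+2) + d m := by
  rw [a, card_split Av, Fin.sum_univ_succ, Fin.sum_univ_succ, Fin.sum_univ_succ]
  simp only [Fin.succ_zero_eq_one, Fin.succ_one_eq_two]
  simp only [av_ins0, av_ins1, av_ins2]
  have hz : ∀ i : Fin m,
      Nat.card {τ : Equiv.Perm (Fin (m+2)) // Av (ins i.succ.succ.succ τ)} = 0 := by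
    intro i
    have : IsEmpty {τ : Equiv.Perm (Fin (m+2)) // Av (ins i.succ.succ.succ τ)} := by
      refine ⟨fun x => not_av_ins_big _ ?_ x.1 x.2⟩
      simp [Fin.val_succ]
    exact Nat.card_of_isEmpty
  rw [Finset.sum_congr rfl (fun i _ => hz i)]
  simp only [Finset.sum_const, smul_eq_mul, Nat.mul_zero, Nat.add_zero]
  show a (m+2) + (a (m+2) + d m) = _
  rw [Nat.add_assoc]

lemma d_rec (m : ℕ) : d (m+1) = a (m+2) + d m := by
  have key : d (m+1) = Nat.card {σ : Equiv.Perm (Fin (m+3)) //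
      Av σ ∧ σ⁻¹ 0 < σ⁻¹ 1} := rfl
  rw [key, card_split (fun σ => Av σ ∧ σ⁻¹ 0 < σ⁻¹ 1),
      Fin.sum_univ_succ, Fin.sum_univ_succ, Fin.sum_univ_succ]
  simp only [Fin.succ_zero_eq_one, Fin.succ_one_eq_two]
  have h0 : ∀ τ : Equiv.Perm (Fin (m+2)),
      (Av (ins 0 τ) ∧ (ins 0 τ)⁻¹ 0 < (ins 0 τ)⁻¹ 1) ↔ Av τ := by
    intro τ
    rw [av_ins0]
    refine and_iff_left_of_imp (fun _ => ?_)
    have hz : (ins 0 τ)⁻¹ 0 = 0 := by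
      rw [Equiv.Perm.inv_eq_iff_eq, ins_zero]
    have hne : (ins 0 τ)⁻¹ 1 ≠ 0 := by
      intro h
      rw [Equiv.Perm.inv_eq_iff_eq, ins_zero] at h
      exact absurd h.symm (by rw [Fin.ext_iff, Fin.val_zero, vone]; omega)
    rw [hz]
    exact Fin.pos_iff_ne_zero.2 hne
  have h1 : ∀ τ : Equiv.Perm (Fin (m+2)),
      (Av (ins 1 τ) ∧ (ins 1 τ)⁻¹ 0 < (ins 1 τ)⁻¹ 1) ↔ False := by
    intro τ
    simp only [iff_false]
    rintro ⟨-, hlt⟩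
    have hz : (ins 1 τ)⁻¹ 1 = 0 := by
      rw [Equiv.Perm.inv_eq_iff_eq, ins_zero]
    rw [hz] at hlt
    exact absurd hlt (Fin.not_lt_zero _)
  have h2 : ∀ τ : Equiv.Perm (Fin (m+2)),
      (Av (ins 2 τ) ∧ (ins 2 τ)⁻¹ 0 < (ins 2 τ)⁻¹ 1) ↔ (Av τ ∧ τ⁻¹ 0 < τ⁻¹ 1) := by
    intro τ
    rw [av_ins2]
    have e0 : (ins 2 τ)⁻¹ 0 = (τ⁻¹ 0).succ := by
      rw [Equiv.Perm.inv_eq_iff_eq, ins_succ, (Equiv.Perm.eq_inv_iff_eq.mp rfl)]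
      rw [succAbove_of_castSucc_lt _ _ (by rw [Fin.lt_def, vtwo]; simp)]
      simp
    have e1 : (ins 2 τ)⁻¹ 1 = (τ⁻¹ 1).succ := by
      rw [Equiv.Perm.inv_eq_iff_eq, ins_succ, (Equiv.Perm.eq_inv_iff_eq.mp rfl)]
      rw [succAbove_of_castSucc_lt _ _ (by rw [Fin.lt_def, vtwo, Fin.coe_castSucc, vone]; omega)]
      rw [Fin.ext_iff, Fin.coe_castSucc, vone, vone]
    rw [e0, e1, Fin.succ_lt_succ_iff]
    tauto
  simp only [h0, h1, h2]
  have hz : ∀ i : Fin m,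
      Nat.card {τ : Equiv.Perm (Fin (m+2)) //
        Av (ins i.succ.succ.succ τ) ∧ (ins i.succ.succ.succ τ)⁻¹ 0 < (ins i.succ.succ.succ τ)⁻¹ 1} = 0 := by
    intro i
    have : IsEmpty {τ : Equiv.Perm (Fin (m+2)) //
        Av (ins i.succ.succ.succ τ) ∧ (ins i.succ.succ.succ τ)⁻¹ 0 < (ins i.succ.succ.succ τ)⁻¹ 1} := by
      refine ⟨fun x => not_av_ins_big _ ?_ x.1 x.2.1⟩
      simp [Fin.val_succ]
    exact Nat.card_of_isEmpty
  rw [Finset.sum_congr rfl (fun i _ => hz i)]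
  have hFalse : Nat.card {τ : Equiv.Perm (Fin (m+2)) // False} = 0 := by
    have : IsEmpty {τ : Equiv.Perm (Fin (m+2)) // False} := ⟨fun x => x.2⟩
    exact Nat.card_of_isEmpty
  rw [hFalse]
  simp only [Finset.sum_const, smul_eq_mul, Nat.mul_zero, Nat.add_zero, Nat.zero_add]
  show a (m+2) + d m = _
  rfl


lemma av_of_small {k : ℕ} (hk : k ≤ 2) (σ : Equiv.Perm (Fin k)) : Av σ := by
  constructor
  · rintro ⟨i, j, l, hij, hjl, -, -⟩
    have hi := i.isLt; have hj := j.isLt; have hl := l.isLt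
    have h1 : (i : ℕ) < j := hij
    have h2 : (j : ℕ) < l := hjl
    omega
  · rintro ⟨i, j, l, r, hij, hjl, hlr, -⟩
    have hi := i.isLt; have hj := j.isLt; have hl := l.isLt; have hr := r.isLt
    have h1 : (i : ℕ) < j := hij
    have h2 : (j : ℕ) < l := hjl
    have h3 : (l : ℕ) < r := hlr
    omega

lemma a_one : a 1 = 1 := by
  rw [a, Nat.card_congr (Equiv.subtypeUnivEquiv (av_of_small (by omega))),
    Nat.card_eq_fintype_card, Fintype.card_perm]
  simp

lemma a_two : a 2 = 2 := by
  rw [a, Nat.card_congr (Equiv.subtypeUnivEquiv (av_of_small (by omega))),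
    Nat.card_eq_fintype_card, Fintype.card_perm]
  simp [Nat.factorial]

lemma d_zero : d 0 = 1 := by
  have huniq : ∀ σ : Equiv.Perm (Fin 2), σ⁻¹ 0 < σ⁻¹ 1 → σ = 1 := by
    intro σ h
    have hv : ((σ⁻¹ 0 : Fin 2) : ℕ) < ((σ⁻¹ 1 : Fin 2) : ℕ) := h
    have b0 := (σ⁻¹ 0).isLt
    have b1 := (σ⁻¹ 1).isLt
    have e0 : σ⁻¹ (0 : Fin 2) = 0 := Fin.ext (by rw [Fin.val_zero]; omega)
    have e1 : σ⁻¹ (1 : Fin 2) = 1 := Fin.ext (by rw [vone]; omega)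
    rw [Equiv.Perm.inv_eq_iff_eq] at e0 e1
    have hall : ∀ i : Fin 2, i = 0 ∨ i = 1 := by decide
    apply Equiv.ext
    intro i
    rcases hall i with rfl | rfl
    · rw [Equiv.Perm.one_apply, ← e0]
    · rw [Equiv.Perm.one_apply, ← e1]
  have : Unique {σ : Equiv.Perm (Fin 2) // Av σ ∧ σ⁻¹ 0 < σ⁻¹ 1} := by
    refine ⟨⟨⟨1, av_of_small (by omega) 1, by decide⟩⟩, ?_⟩
    rintro ⟨σ, -, hlt⟩
    exact Subtype.ext (huniq σ hlt)
  exact Nat.card_unique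

lemma main2 : ∀ m : ℕ, a (m+2) = Nat.fib (2*m+3) ∧ d m = Nat.fib (2*m+2) := by
  intro m
  induction m with
  | zero =>
    refine ⟨?_, ?_⟩
    · rw [a_two]; decide
    · rw [d_zero]; decide
  | succ m ih =>
    obtain ⟨iha, ihd⟩ := ih
    have ha : a (m+3) = a (m+2) + a (m+2) + d m := a_rec m
    have hd : d (m+1) = a (m+2) + d m := d_rec m
    have f1 : Nat.fib (2*m+3+2) = Nat.fib (2*m+3) + Nat.fib (2*m+3+1) := Nat.fib_add_two
    have f2 : Nat.fib (2*m+2+2) = Nat.fib (2*m+2) + Nat.fib (2*m+2+1) := Nat.fib_add_two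
    have e1 : 2*(m+1)+3 = 2*m+3+2 := by ring
    have e2 : 2*(m+1)+2 = 2*m+2+2 := by ring
    have e3 : 2*m+3+1 = 2*m+2+2 := by ring
    have e4 : 2*m+2+1 = 2*m+3 := by ring
    constructor
    · show a (m+3) = _
      rw [ha, e1, f1, e3, f2, e4]
      omega
    · rw [hd, e2, f2, e4]
      omega

end AvAux

theorem stmt_1 (n : ℕ) (hn : 1 ≤ n) :
    Nat.card {σ : Equiv.Perm (Fin n) // Avoids321 σ ∧ Avoids4123 σ} =
      Nat.fib (2 * n - 1) := by
  cases n with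
  | zero => omega
  | succ k =>
    cases k with
    | zero =>
      show AvAux.a 1 = Nat.fib (2 * 1 - 1)
      rw [AvAux.a_one]
      decide
    | succ m =>
      show AvAux.a (m+2) = Nat.fib (2 * (m+2) - 1)
      have he : 2 * (m+2) - 1 = 2*m+3 := by omega
      rw [(AvAux.main2 m).1, he]
end

section
/- For 1 ≤ k < n, the number of permutations σ of {1,...,n} avoiding 321 and 4123 with σ(k) = 1 equals k times the number of permutations of {1,...,n-k} avoiding 321 and 4123. -/
namespace Scratch

def enc (k j v : ℕ) : ℕ := if v = 0 then j else k + v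

def bfun (k m j : ℕ) (τ : Equiv.Perm (Fin m)) (p : Fin (k + m)) : ℕ :=
  if p.val + 1 < k then (if p.val + 1 < j then p.val + 1 else p.val + 2)
  else if h : k ≤ p.val then enc k j (τ ⟨p.val - k, by have := p.isLt; omega⟩).val
  else 0

variable {k m j : ℕ} {τ : Equiv.Perm (Fin m)}

lemma enc_lt {v : ℕ} (hj : j ≤ k) (hm : 1 ≤ m) (hv : v < m) : enc k j v < k + m := by
  unfold enc; split <;> omega

lemma bfun_lt (hj : j ≤ k) (hm : 1 ≤ m) (τ : Equiv.Perm (Fin m))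
    (p : Fin (k + m)) : bfun k m j τ p < k + m := by
  unfold bfun
  split
  · split <;> omega
  · split
    · exact enc_lt hj hm (Fin.isLt _)
    · omega

lemma bfun_A {p : Fin (k+m)} (h : p.val + 1 < k) :
    bfun k m j τ p = if p.val + 1 < j then p.val + 1 else p.val + 2 := by
  unfold bfun; rw [if_pos h]

lemma bfun_B {p : Fin (k+m)} (h : p.val + 1 = k) : bfun k m j τ p = 0 := by
  unfold bfun; rw [if_neg (by omega), dif_neg (by omega)]

lemma bfun_C {p : Fin (k+m)} (h : k ≤ p.val) :
    bfun k m j τ p = enc k j (τ ⟨p.val - k, by have := p.isLt; omega⟩).val := by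
  unfold bfun; rw [if_neg (by omega), dif_pos h]

lemma bfun_A_bounds {p : Fin (k+m)} (h : p.val + 1 < k) :
    p.val + 1 ≤ bfun k m j τ p ∧ bfun k m j τ p ≤ p.val + 2 ∧
    bfun k m j τ p ≤ k ∧ bfun k m j τ p ≠ j ∧ 1 ≤ bfun k m j τ p := by
  rw [bfun_A h]; split <;> omega

lemma bfun_A_mono {p q : Fin (k+m)} (hp : p.val + 1 < k) (hq : q.val + 1 < k)
    (hpq : p < q) : bfun k m j τ p < bfun k m j τ q := by
  rw [bfun_A hp, bfun_A hq]
  rw [Fin.lt_def] at hpq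
  split <;> split <;> omega

lemma bfun_C_cases {p : Fin (k+m)} (h : k ≤ p.val) (hjk : j ≤ k) :
    (bfun k m j τ p = j ∧ (τ ⟨p.val - k, by have := p.isLt; omega⟩).val = 0)
    ∨ (k + 1 ≤ bfun k m j τ p ∧
        bfun k m j τ p = k + (τ ⟨p.val - k, by have := p.isLt; omega⟩).val) := by
  rw [bfun_C h]; unfold enc; split
  · left; exact ⟨rfl, by assumption⟩
  · right; omega

lemma enc_lt_iff {v w : ℕ} (hjk : j ≤ k) :
    enc k j v < enc k j w ↔ v < w := by
  unfold enc; split <;> split <;> omega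

lemma bfun_inj (hj : 1 ≤ j) (hjk : j ≤ k) :
    Function.Injective (bfun k m j τ) := by
  intro p q hpq
  have hp := p.isLt; have hq := q.isLt
  by_contra hne
  rcases lt_trichotomy (p.val + 1) k with hA | hB | hC <;>
    rcases lt_trichotomy (q.val + 1) k with hA' | hB' | hC'
  · rcases Fin.lt_or_lt_of_ne hne with h | h
    · exact absurd hpq (Nat.ne_of_lt (bfun_A_mono hA hA' h))
    · exact absurd hpq.symm (Nat.ne_of_lt (bfun_A_mono hA' hA h))
  · have h1 := (bfun_A_bounds (τ := τ) (j := j) hA).2.2.2.2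
    rw [bfun_B hB'] at hpq; omega
  · have h1 := bfun_A_bounds (τ := τ) (j := j) hA
    rcases bfun_C_cases (τ := τ) (by omega : k ≤ q.val) hjk with ⟨h2, _⟩ | ⟨h2, _⟩ <;> omega
  · have h1 := (bfun_A_bounds (τ := τ) (j := j) hA').2.2.2.2
    rw [bfun_B hB] at hpq; omega
  · exact hne (Fin.ext (by omega))
  · rw [bfun_B hB] at hpq
    rcases bfun_C_cases (τ := τ) (by omega : k ≤ q.val) hjk with ⟨h2, _⟩ | ⟨h2, _⟩ <;> omega
  · have h1 := bfun_A_bounds (τ := τ) (j := j) hA'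
    rcases bfun_C_cases (τ := τ) (by omega : k ≤ p.val) hjk with ⟨h2, _⟩ | ⟨h2, _⟩ <;> omega
  · rw [bfun_B hB'] at hpq
    rcases bfun_C_cases (τ := τ) (by omega : k ≤ p.val) hjk with ⟨h2, _⟩ | ⟨h2, _⟩ <;> omega
  · have hkp : k ≤ p.val := by omega
    have hkq : k ≤ q.val := by omega
    rw [bfun_C hkp, bfun_C hkq] at hpq
    have hv : (τ ⟨p.val - k, by omega⟩).val = (τ ⟨q.val - k, by omega⟩).val := by
      by_contra hv
      rcases Nat.lt_or_ge (τ ⟨p.val - k, by omega⟩).val (τ ⟨q.val - k, by omega⟩).val with h|h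
      · have := (enc_lt_iff (k := k) (j := j) hjk).mpr h; omega
      · rcases Nat.lt_or_eq_of_le h with h|h
        · have := (enc_lt_iff (k := k) (j := j) hjk).mpr h; omega
        · omega
    have h2 := τ.injective (Fin.ext hv)
    have h3 : p.val - k = q.val - k := congrArg Fin.val h2
    exact hne (Fin.ext (by omega))

/-- the built permutation -/
noncomputable def bF (k m j : ℕ) (hj : 1 ≤ j) (hjk : j ≤ k) (hm : 1 ≤ m) (τ : Equiv.Perm (Fin m)) :
    Equiv.Perm (Fin (k + m)) :=
  Equiv.ofBijective (fun p => ⟨bfun k m j τ p, bfun_lt hjk hm τ p⟩)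
    (Finite.injective_iff_bijective.mp
      (fun p q h => bfun_inj hj hjk (congrArg Fin.val h)))

lemma bF_val (hj : 1 ≤ j) (hjk : j ≤ k) (hm : 1 ≤ m) (p : Fin (k+m)) :
    ((bF k m j hj hjk hm τ) p).val = bfun k m j τ p := rfl

lemma bF_avoids321 (hj : 1 ≤ j) (hjk : j ≤ k) (hm : 1 ≤ m) (hτ : Avoids321 τ) :
    Avoids321 (bF k m j hj hjk hm τ) := by
  rintro ⟨i, a, b, hia, hab, h1, h2⟩
  rw [Fin.lt_def] at hia hab h1 h2
  rw [bF_val hj hjk hm, bF_val hj hjk hm] at h1 h2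
  have hi := i.isLt; have hb := b.isLt
  rcases lt_trichotomy (a.val + 1) k with hA | hB | hC
  · -- a in zone A, so i in zone A, contradiction with monotonicity
    have : bfun k m j τ i < bfun k m j τ a :=
      bfun_A_mono (by omega) hA (Fin.lt_def.mpr hia)
    omega
  · rw [bfun_B hB] at h1; omega
  · have hka : k ≤ a.val := by omega
    have hkb : k ≤ b.val := by omega
    rcases lt_trichotomy (i.val + 1) k with hiA | hiB | hiC
    · have h3 := bfun_A_bounds (τ := τ) (j := j) hiA
      rcases bfun_C_cases (τ := τ) hka hjk with ⟨h4, _⟩ | ⟨h4, _⟩ <;>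
        rcases bfun_C_cases (τ := τ) hkb hjk with ⟨h5, _⟩ | ⟨h5, _⟩ <;> omega
    · rw [bfun_B hiB] at h2; omega
    · have hki : k ≤ i.val := by omega
      rw [bfun_C hka, bfun_C hkb] at h1
      rw [bfun_C hka, bfun_C hki] at h2
      rw [enc_lt_iff hjk] at h1 h2
      exact hτ ⟨⟨i.val - k, by omega⟩, ⟨a.val - k, by omega⟩, ⟨b.val - k, by omega⟩,
        by simp [Fin.lt_def]; omega, by simp [Fin.lt_def]; omega,
        Fin.lt_def.mpr h1, Fin.lt_def.mpr h2⟩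

lemma bF_avoids4123 (hj : 1 ≤ j) (hjk : j ≤ k) (hm : 1 ≤ m) (hτ : Avoids4123 τ) :
    Avoids4123 (bF k m j hj hjk hm τ) := by
  rintro ⟨i, a, b, c, hia, hab, hbc, h1, h2, h3⟩
  rw [Fin.lt_def] at hia hab hbc h1 h2 h3
  rw [bF_val hj hjk hm, bF_val hj hjk hm] at h1 h2
  rw [bF_val hj hjk hm, bF_val hj hjk hm] at h3
  have hi := i.isLt; have hc := c.isLt
  rcases lt_trichotomy (i.val + 1) k with hiA | hiB | hiC
  · -- i in A : a not in A (mono), so b, c in C, both values = j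
    have haA : ¬ (a.val + 1 < k) := by
      intro haA
      have : bfun k m j τ i < bfun k m j τ a := bfun_A_mono hiA haA (Fin.lt_def.mpr hia)
      omega
    have hkb : k ≤ b.val := by omega
    have hkc : k ≤ c.val := by omega
    have h4 := bfun_A_bounds (τ := τ) (j := j) hiA
    rcases bfun_C_cases (τ := τ) hkb hjk with ⟨h5, _⟩ | ⟨h5, _⟩ <;>
      rcases bfun_C_cases (τ := τ) hkc hjk with ⟨h6, _⟩ | ⟨h6, _⟩ <;> omega
  · rw [bfun_B hiB] at h3; omega
  · have hki : k ≤ i.val := by omega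
    have hka : k ≤ a.val := by omega
    have hkb : k ≤ b.val := by omega
    have hkc : k ≤ c.val := by omega
    rw [bfun_C hka, bfun_C hkb] at h1
    rw [bfun_C hkb, bfun_C hkc] at h2
    rw [bfun_C hkc, bfun_C hki] at h3
    rw [enc_lt_iff hjk] at h1 h2 h3
    exact hτ ⟨⟨i.val - k, by omega⟩, ⟨a.val - k, by omega⟩, ⟨b.val - k, by omega⟩,
      ⟨c.val - k, by omega⟩,
      by simp [Fin.lt_def]; omega, by simp [Fin.lt_def]; omega, by simp [Fin.lt_def]; omega,
      Fin.lt_def.mpr h1, Fin.lt_def.mpr h2, Fin.lt_def.mpr h3⟩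


variable {k m : ℕ}

/-- decode a tail value -/
def dec (k v : ℕ) : ℕ := if v ≤ k then 0 else v - k

lemma dec_reflect {k v w : ℕ} (h : dec k v < dec k w) : v < w := by
  unfold dec at h; split at h <;> split at h <;> omega

section Surj

variable (hk : 1 ≤ k) (hm : 1 ≤ m) (σ : Equiv.Perm (Fin (k + m)))
  (h321 : Avoids321 σ) (h4123 : Avoids4123 σ)
  (h0 : ∀ h : k - 1 < k + m, (σ ⟨k - 1, h⟩).val = 0)

include hk hm h0

lemma val_zero_iff (p : Fin (k + m)) : (σ p).val = 0 ↔ p.val = k - 1 := by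
  constructor
  · intro h
    have : σ p = σ ⟨k - 1, by omega⟩ := Fin.ext (by rw [h0]; omega)
    exact congrArg Fin.val (σ.injective this)
  · intro h
    have : p = ⟨k - 1, by omega⟩ := Fin.ext h
    rw [this, h0]

include h321 in
lemma sA_mono {p q : Fin (k + m)} (hpq : p < q) (hq : q.val + 1 < k) :
    (σ p).val < (σ q).val := by
  by_contra hc
  have hne : σ q ≠ σ p := fun h => absurd (σ.injective h) (Fin.ne_of_gt hpq)
  have hlt : (σ q).val < (σ p).val := by
    rcases Nat.lt_or_ge (σ q).val (σ p).val with h | h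
    · exact h
    · exact absurd (Fin.ext (by omega)) hne
  have hq0 : 0 < (σ q).val := by
    rcases Nat.eq_zero_or_pos (σ q).val with h | h
    · rw [val_zero_iff hk hm σ h0] at h; omega
    · exact h
  refine h321 ⟨p, q, ⟨k - 1, by omega⟩, hpq, Fin.lt_def.mpr (by simp; omega),
    Fin.lt_def.mpr ?_, Fin.lt_def.mpr hlt⟩
  rw [h0]; omega

include h321 in
lemma sA_gap {p q : Fin (k + m)} (hpq : p ≤ q) (hq : q.val + 1 < k) :
    (σ p).val + (q.val - p.val) ≤ (σ q).val := by
  obtain ⟨d, hd⟩ : ∃ d, q.val = p.val + d := ⟨q.val - p.val, by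
    have := Fin.le_def.mp hpq; omega⟩
  clear hpq
  induction d generalizing q with
  | zero => have : p = q := Fin.ext (by omega); subst this; omega
  | succ d ih =>
    have hlt : p.val + d < k + m := by have := q.isLt; omega
    have hq' : ((⟨p.val + d, hlt⟩ : Fin (k+m))).val + 1 < k := by simp; omega
    have h1 := ih (q := ⟨p.val + d, hlt⟩) hq' (by simp)
    have h2 : (σ ⟨p.val + d, hlt⟩).val < (σ q).val :=
      sA_mono hk hm σ h321 h0 (p := ⟨p.val + d, hlt⟩) (q := q)
        (Fin.lt_def.mpr (by simp; omega)) hq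
    simp at h1
    omega

include h321 in
lemma sA_lb {p : Fin (k + m)} (hp : p.val + 1 < k) : p.val + 1 ≤ (σ p).val := by
  have h1 : (1 : ℕ) ≤ (σ ⟨0, by omega⟩).val := by
    rcases Nat.eq_zero_or_pos (σ ⟨0, by omega⟩).val with h | h
    · rw [val_zero_iff hk hm σ h0] at h; simp at h; omega
    · exact h
  have := sA_gap hk hm σ h321 h0 (p := ⟨0, by omega⟩) (q := p)
    (Fin.le_def.mpr (by simp)) hp
  simp at this; omega

omit hk h0 in
lemma exists_small_tail : ∃ p : Fin (k + m), k ≤ p.val ∧ (σ p).val ≤ k := by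
  by_contra hc
  push_neg at hc
  have key : ∀ v ∈ Finset.Iic (⟨k, by omega⟩ : Fin (k + m)),
      σ.symm v ∈ Finset.Iio (⟨k, by omega⟩ : Fin (k + m)) := by
    intro v hv
    simp only [Finset.mem_Iic, Fin.le_def] at hv
    simp only [Finset.mem_Iio, Fin.lt_def]
    by_contra hcc
    have h2 := hc (σ.symm v) (by omega)
    rw [Equiv.apply_symm_apply] at h2
    omega
  have hcard := Finset.card_le_card_of_injOn _ key
    (fun a _ b _ h => σ.symm.injective h)
  rw [Fin.card_Iic, Fin.card_Iio] at hcard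
  simp at hcard

include h321 h4123 in
lemma small_aux {p q : Fin (k + m)} (hp : k ≤ p.val) (hq : k ≤ q.val)
    (hpq : p < q) (hvp : (σ p).val ≤ k) (hvq : (σ q).val ≤ k) : False := by
  classical
  have hvp0 : 1 ≤ (σ p).val := by
    rcases Nat.eq_zero_or_pos (σ p).val with h | h
    · rw [val_zero_iff hk hm σ h0] at h; omega
    · exact h
  have hvq0 : 1 ≤ (σ q).val := by
    rcases Nat.eq_zero_or_pos (σ q).val with h | h
    · rw [val_zero_iff hk hm σ h0] at h; omega
    · exact h
  by_cases hbig : ∃ r : Fin (k + m), r.val + 1 < k ∧ k + 1 ≤ (σ r).val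
  · obtain ⟨r, hr1, hr2⟩ := hbig
    have hk2 : 2 ≤ k := by omega
    have hw2 : k - 2 < k + m := by omega
    have hw1 : k - 1 < k + m := by omega
    set w : Fin (k + m) := ⟨k - 2, hw2⟩ with hwdef
    have hwval : w.val = k - 2 := rfl
    have hM : k + 1 ≤ (σ w).val := by
      rcases Nat.lt_or_ge r.val (k - 2) with h | h
      · have := sA_mono hk hm σ h321 h0 (p := r) (q := w)
          (Fin.lt_def.mpr (by rw [hwval]; omega)) (by rw [hwval]; omega)
        omega
      · have : r = w := Fin.ext (by rw [hwval]; omega)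
        rw [← this]; omega
    rcases Nat.lt_or_ge (σ p).val (σ q).val with h | h
    · refine h4123 ⟨w, ⟨k - 1, hw1⟩, p, q,
        Fin.lt_def.mpr (by rw [hwval]; simp; omega),
        Fin.lt_def.mpr (by simp; omega), hpq,
        Fin.lt_def.mpr ?_, Fin.lt_def.mpr h, Fin.lt_def.mpr (by omega)⟩
      rw [h0]; omega
    · have hvals : (σ p).val ≠ (σ q).val :=
        fun hh => absurd (σ.injective (Fin.ext hh)) (Fin.ne_of_lt hpq)
      refine h321 ⟨w, p, q, Fin.lt_def.mpr (by rw [hwval]; omega), hpq,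
        Fin.lt_def.mpr (by omega), Fin.lt_def.mpr (by omega)⟩
  · push_neg at hbig
    have hne : p ≠ q := Fin.ne_of_lt hpq
    set src : Finset (Fin (k+m)) :=
      insert p (insert q (Finset.Iic (⟨k - 1, by omega⟩ : Fin (k+m)))) with hsrc
    have hqni : q ∉ Finset.Iic (⟨k - 1, by omega⟩ : Fin (k+m)) := by
      simp [Finset.mem_Iic, Fin.le_def]; omega
    have hpni : p ∉ insert q (Finset.Iic (⟨k - 1, by omega⟩ : Fin (k+m))) := by
      simp only [Finset.mem_insert, Finset.mem_Iic, Fin.le_def, Fin.val_mk, not_or]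
      exact ⟨hne, by omega⟩
    have hcards : src.card = k + 2 := by
      rw [hsrc, Finset.card_insert_of_notMem hpni, Finset.card_insert_of_notMem hqni,
        Fin.card_Iic]
      simp; omega
    have hmaps : ∀ r ∈ src, (σ r).val ∈ Finset.range (k + 1) := by
      intro r hr
      simp only [hsrc, Finset.mem_insert, Finset.mem_Iic, Fin.le_def] at hr
      simp only [Finset.mem_range]
      rcases hr with rfl | rfl | hr
      · omega
      · omega
      · replace hr : r.val ≤ k - 1 := hr
        rcases Nat.lt_or_ge (r.val + 1) k with h | h
        · have := hbig r h; omega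
        · have hval : r.val = k - 1 := by omega
          have : r = (⟨k - 1, by omega⟩ : Fin (k+m)) := Fin.ext hval
          rw [this, h0]; omega
    have hcard := Finset.card_le_card_of_injOn _ hmaps
      (fun a _ b _ h => σ.injective (Fin.ext h))
    rw [hcards, Finset.card_range] at hcard
    omega

include h321 h4123 in
lemma small_tail_unique {p q : Fin (k + m)} (hp : k ≤ p.val) (hq : k ≤ q.val)
    (hvp : (σ p).val ≤ k) (hvq : (σ q).val ≤ k) : p = q := by
  by_contra hne
  rcases Fin.lt_or_lt_of_ne hne with h | h
  · exact small_aux hk hm σ h321 h4123 h0 hp hq h hvp hvq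
  · exact small_aux hk hm σ h321 h4123 h0 hq hp h hvq hvp

include h321 h4123 in
/-- prefix values are at most k -/
lemma sA_ub {p : Fin (k + m)} (hp : p.val + 1 < k) : (σ p).val ≤ k := by
  classical
  by_contra hc
  push_neg at hc
  obtain ⟨p₀, hp₀, hv₀⟩ := exists_small_tail (hm := hm) σ
  set tgt : Finset (Fin (k+m)) :=
    insert p₀ ((Finset.Iic (⟨k - 1, by omega⟩ : Fin (k+m))).erase p) with htgt
  have hp₀ni : p₀ ∉ (Finset.Iic (⟨k - 1, by omega⟩ : Fin (k+m))).erase p := by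
    simp only [Finset.mem_erase, Finset.mem_Iic, Fin.le_def, Fin.val_mk, not_and]
    intro _; omega
  have hpmem : p ∈ Finset.Iic (⟨k - 1, by omega⟩ : Fin (k+m)) := by
    simp only [Finset.mem_Iic, Fin.le_def, Fin.val_mk]; omega
  have htcard : tgt.card = k := by
    rw [htgt, Finset.card_insert_of_notMem hp₀ni, Finset.card_erase_of_mem hpmem,
      Fin.card_Iic]
    simp; omega
  have hmaps : ∀ v ∈ Finset.Iic (⟨k, by omega⟩ : Fin (k + m)), σ.symm v ∈ tgt := by
    intro v hv
    simp only [Finset.mem_Iic] at hv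
    replace hv : v.val ≤ k := hv
    have hval : (σ (σ.symm v)).val = v.val := by rw [Equiv.apply_symm_apply]
    simp only [htgt, Finset.mem_insert, Finset.mem_erase, Finset.mem_Iic, Fin.le_def,
      Fin.val_mk]
    rcases Nat.lt_or_ge (σ.symm v).val k with h | h
    · right
      constructor
      · intro hh; rw [hh] at hval; omega
      · omega
    · left
      exact small_tail_unique hk hm σ h321 h4123 h0 h hp₀ (by omega) hv₀
  have hcard := Finset.card_le_card_of_injOn _ hmaps
    (fun a _ b _ h => σ.symm.injective h)
  rw [Fin.card_Iic, htcard] at hcard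
  simp at hcard

include h321 h4123 in
lemma sA_ub2 {p : Fin (k + m)} (hp : p.val + 1 < k) : (σ p).val ≤ p.val + 2 := by
  have hw2 : k - 2 < k + m := by omega
  have hg := sA_gap hk hm σ h321 h0 (p := p) (q := ⟨k - 2, hw2⟩)
    (Fin.le_def.mpr (by simp; omega)) (by simp; omega)
  have hu := sA_ub hk hm σ h321 h4123 h0 (p := ⟨k - 2, hw2⟩) (by simp; omega)
  simp only [Fin.val_mk] at hg
  omega

include h321 h4123 in
lemma prefix_formula (p₀ : Fin (k + m)) (hp₀ : k ≤ p₀.val) (hj : (σ p₀).val ≤ k)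
    {p : Fin (k + m)} (hp : p.val + 1 < k) :
    (σ p).val = if p.val + 1 < (σ p₀).val then p.val + 1 else p.val + 2 := by
  have hj1 : 1 ≤ (σ p₀).val := by
    rcases Nat.eq_zero_or_pos (σ p₀).val with h | h
    · rw [val_zero_iff hk hm σ h0] at h; omega
    · exact h
  have hne : (σ p).val ≠ (σ p₀).val := by
    intro h
    have := σ.injective (Fin.ext h)
    have := congrArg Fin.val this
    omega
  have hlb := sA_lb hk hm σ h321 h0 hp
  have hub := sA_ub2 hk hm σ h321 h4123 h0 hp
  split
  next hcase =>
    by_contra hcc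
    have hpp : (σ p).val = p.val + 2 := by omega
    have hpos : (σ p₀).val - 2 < k + m := by omega
    have hg := sA_gap hk hm σ h321 h0 (p := p) (q := ⟨(σ p₀).val - 2, hpos⟩)
      (Fin.le_def.mpr (by simp; omega)) (by simp; omega)
    have hub2 := sA_ub2 hk hm σ h321 h4123 h0 (p := ⟨(σ p₀).val - 2, hpos⟩)
      (by simp; omega)
    simp only [Fin.val_mk] at hg hub2
    have hval : (σ ⟨(σ p₀).val - 2, hpos⟩).val = (σ p₀).val := by omega
    have := congrArg Fin.val (σ.injective (Fin.ext hval))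
    simp only [Fin.val_mk] at this
    omega
  next hcase =>
    by_contra hcc
    have hpp : (σ p).val = p.val + 1 := by omega
    have hpos : (σ p₀).val - 1 < k + m := by omega
    have hg := sA_gap hk hm σ h321 h0 (p := ⟨(σ p₀).val - 1, hpos⟩) (q := p)
      (Fin.le_def.mpr (by simp; omega)) hp
    have hlb2 := sA_lb hk hm σ h321 h0 (p := ⟨(σ p₀).val - 1, hpos⟩)
      (by simp; omega)
    simp only [Fin.val_mk] at hg hlb2
    have hval : (σ ⟨(σ p₀).val - 1, hpos⟩).val = (σ p₀).val := by omega
    have := congrArg Fin.val (σ.injective (Fin.ext hval))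
    simp only [Fin.val_mk] at this
    omega


include h321 h4123 in
lemma surj_main : ∃ (j : ℕ) (hj1 : 1 ≤ j) (hjk : j ≤ k) (τ : Equiv.Perm (Fin m)),
    Avoids321 τ ∧ Avoids4123 τ ∧ bF k m j hj1 hjk hm τ = σ := by
  classical
  obtain ⟨p₀, hp₀, hv₀⟩ := exists_small_tail (hm := hm) σ
  have hj1 : 1 ≤ (σ p₀).val := by
    rcases Nat.eq_zero_or_pos (σ p₀).val with h | h
    · rw [val_zero_iff hk hm σ h0] at h; omega
    · exact h
  -- positions of the tail
  have tpos : ∀ t : Fin m, k + t.val < k + m := fun t => by have := t.isLt; omega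
  -- the tail pattern as a function
  have tfun_lt : ∀ t : Fin m, dec k (σ ⟨k + t.val, tpos t⟩).val < m := by
    intro t
    have := (σ ⟨k + t.val, tpos t⟩).isLt
    unfold dec; split <;> omega
  set tf : Fin m → Fin m := fun t => ⟨dec k (σ ⟨k + t.val, tpos t⟩).val, tfun_lt t⟩
    with htf
  have tf_inj : Function.Injective tf := by
    intro a b hab
    have hab' : dec k (σ ⟨k + a.val, tpos a⟩).val = dec k (σ ⟨k + b.val, tpos b⟩).val :=
      congrArg Fin.val hab
    unfold dec at hab'
    split at hab' <;> split at hab' <;> rename_i ha hb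
    · -- both values ≤ k : unique small tail position
      have := small_tail_unique hk hm σ h321 h4123 h0
        (p := ⟨k + a.val, tpos a⟩) (q := ⟨k + b.val, tpos b⟩)
        (by simp) (by simp) ha hb
      have := congrArg Fin.val this
      simp at this
      exact Fin.ext this
    · omega
    · omega
    · have hval : (σ ⟨k + a.val, tpos a⟩).val = (σ ⟨k + b.val, tpos b⟩).val := by omega
      have := σ.injective (Fin.ext hval)
      have := congrArg Fin.val this
      simp at this
      exact Fin.ext this
  set τ : Equiv.Perm (Fin m) :=
    Equiv.ofBijective tf (Finite.injective_iff_bijective.mp tf_inj) with hτ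
  have hτval : ∀ t : Fin m, (τ t).val = dec k (σ ⟨k + t.val, tpos t⟩).val := fun t => rfl
  -- order reflection for tail values
  have hrefl : ∀ a b : Fin m, τ a < τ b →
      (σ ⟨k + a.val, tpos a⟩).val < (σ ⟨k + b.val, tpos b⟩).val := by
    intro a b h
    have h2 := Fin.lt_def.mp h
    rw [hτval a, hτval b] at h2
    exact dec_reflect h2
  have hτ321 : Avoids321 τ := by
    rintro ⟨a, b, c, hab, hbc, h1, h2⟩
    refine h321 ⟨⟨k + a.val, tpos a⟩, ⟨k + b.val, tpos b⟩, ⟨k + c.val, tpos c⟩,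
      Fin.lt_def.mpr (by simp; exact Fin.lt_def.mp hab),
      Fin.lt_def.mpr (by simp; exact Fin.lt_def.mp hbc),
      Fin.lt_def.mpr (hrefl _ _ h1), Fin.lt_def.mpr (hrefl _ _ h2)⟩
  have hτ4123 : Avoids4123 τ := by
    rintro ⟨a, b, c, d, hab, hbc, hcd, h1, h2, h3⟩
    refine h4123 ⟨⟨k + a.val, tpos a⟩, ⟨k + b.val, tpos b⟩, ⟨k + c.val, tpos c⟩,
      ⟨k + d.val, tpos d⟩,
      Fin.lt_def.mpr (by simp; exact Fin.lt_def.mp hab),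
      Fin.lt_def.mpr (by simp; exact Fin.lt_def.mp hbc),
      Fin.lt_def.mpr (by simp; exact Fin.lt_def.mp hcd),
      Fin.lt_def.mpr (hrefl _ _ h1), Fin.lt_def.mpr (hrefl _ _ h2),
      Fin.lt_def.mpr (hrefl _ _ h3)⟩
  refine ⟨(σ p₀).val, hj1, hv₀, τ, hτ321, hτ4123, ?_⟩
  apply Equiv.ext
  intro p
  apply Fin.ext
  rw [bF_val]
  rcases lt_trichotomy (p.val + 1) k with hA | hB | hC
  · rw [bfun_A hA]
    exact (prefix_formula hk hm σ h321 h4123 h0 p₀ hp₀ hv₀ hA).symm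
  · rw [bfun_B hB]
    symm
    rw [val_zero_iff hk hm σ h0]
    omega
  · have hkp : k ≤ p.val := by omega
    rw [bfun_C hkp]
    have hpeq : (⟨k + (p.val - k), tpos ⟨p.val - k, by have := p.isLt; omega⟩⟩ :
        Fin (k + m)) = p := Fin.ext (by simp; omega)
    have hdecval : (τ ⟨p.val - k, by have := p.isLt; omega⟩).val = dec k (σ p).val := by
      rw [hτval]
      congr 1
      rw [hpeq]
    rw [hdecval]
    rcases Nat.lt_or_ge k (σ p).val with h | h
    · have hd : dec k (σ p).val = (σ p).val - k := by
        unfold dec; rw [if_neg (by omega)]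
      rw [hd]
      unfold enc
      rw [if_neg (by omega)]
      omega
    · have hd : dec k (σ p).val = 0 := by unfold dec; rw [if_pos h]
      rw [hd]
      unfold enc
      rw [if_pos rfl]
      have heq := small_tail_unique hk hm σ h321 h4123 h0 (p := p) (q := p₀) hkp hp₀ h hv₀
      rw [heq]

end Surj

lemma enc_inj {j a b : ℕ} (hjk : j ≤ k) (h : enc k j a = enc k j b) : a = b := by
  unfold enc at h; split at h <;> split at h <;> omega

lemma bF_congr {j j' : ℕ} {hj1 : 1 ≤ j} {hjk : j ≤ k} {hj1' : 1 ≤ j'} {hjk' : j' ≤ k}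
    {hm : 1 ≤ m} (τ : Equiv.Perm (Fin m)) (h : j = j') :
    bF k m j hj1 hjk hm τ = bF k m j' hj1' hjk' hm τ := by subst h; rfl

lemma bF_inj {j j' : ℕ} {hj1 : 1 ≤ j} {hjk : j ≤ k} {hj1' : 1 ≤ j'} {hjk' : j' ≤ k}
    {hm : 1 ≤ m} {τ τ' : Equiv.Perm (Fin m)}
    (h : bF k m j hj1 hjk hm τ = bF k m j' hj1' hjk' hm τ') : j = j' ∧ τ = τ' := by
  have hval : ∀ p, bfun k m j τ p = bfun k m j' τ' p := by
    intro p
    have h1 := DFunLike.congr_fun h p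
    have h2 := congrArg Fin.val h1
    rw [bF_val, bF_val] at h2
    exact h2
  have tpos : ∀ t : Fin m, k + t.val < k + m := fun t => by have := t.isLt; omega
  have key : ∀ t : Fin m,
      enc k j (τ t).val = enc k j' (τ' t).val := by
    intro t
    have h1 := hval ⟨k + t.val, tpos t⟩
    rw [bfun_C (by simp), bfun_C (by simp)] at h1
    have hst : ∀ (h : (⟨k + t.val, tpos t⟩ : Fin (k+m)).val - k < m),
        (⟨(⟨k + t.val, tpos t⟩ : Fin (k+m)).val - k, h⟩ : Fin m) = t :=
      fun h => Fin.ext (by simp)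
    rw [hst] at h1
    exact h1
  have hjj : j = j' := by
    have h1 := key (τ.symm ⟨0, by omega⟩)
    rw [Equiv.apply_symm_apply] at h1
    have h2 : enc k j ((⟨0, by omega⟩ : Fin m)).val = j := by
      unfold enc; rw [if_pos rfl]
    rw [h2] at h1
    unfold enc at h1
    split at h1 <;> omega
  subst hjj
  refine ⟨rfl, Equiv.ext fun t => Fin.ext (enc_inj hjk (key t))⟩

lemma key_count (hk : 1 ≤ k) (hm : 1 ≤ m) :
    Nat.card {σ : Equiv.Perm (Fin (k + m)) // Avoids321 σ ∧ Avoids4123 σ ∧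
        σ ⟨k - 1, by omega⟩ = ⟨0, by omega⟩} =
      k * Nat.card {τ : Equiv.Perm (Fin m) // Avoids321 τ ∧ Avoids4123 τ} := by
  classical
  have pf1 : k - 1 < k + m := by omega
  have pf2 : 0 < k + m := by omega
  show Nat.card {σ : Equiv.Perm (Fin (k + m)) // Avoids321 σ ∧ Avoids4123 σ ∧
      σ ⟨k - 1, pf1⟩ = ⟨0, pf2⟩} = _
  set Φ : Fin k × {τ : Equiv.Perm (Fin m) // Avoids321 τ ∧ Avoids4123 τ} →
      {σ : Equiv.Perm (Fin (k + m)) // Avoids321 σ ∧ Avoids4123 σ ∧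
        σ ⟨k - 1, pf1⟩ = ⟨0, pf2⟩} :=
    fun x => ⟨bF k m (x.1.val + 1) (by omega) (by have := x.1.isLt; omega) hm x.2.1,
      bF_avoids321 _ _ _ x.2.2.1,
      bF_avoids4123 _ _ _ x.2.2.2,
      Fin.ext (by
        rw [bF_val]
        have hb : ((⟨k - 1, pf1⟩ : Fin (k + m))).val + 1 = k := by simp; omega
        rw [bfun_B hb])⟩ with hΦ
  have hbij : Function.Bijective Φ := by
    constructor
    · intro a b hab
      have h1 : (Φ a).val = (Φ b).val := congrArg Subtype.val hab
      simp only [hΦ] at h1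
      obtain ⟨h2, h3⟩ := bF_inj h1
      obtain ⟨a1, a2⟩ := a
      obtain ⟨b1, b2⟩ := b
      simp only at h2 h3
      have : a1 = b1 := Fin.ext (by omega)
      subst this
      have : a2 = b2 := Subtype.ext h3
      subst this
      rfl
    · rintro ⟨σ, h1, h2, h3⟩
      have h0 : ∀ h : k - 1 < k + m, (σ ⟨k - 1, h⟩).val = 0 :=
        fun h => congrArg Fin.val h3
      obtain ⟨j, hj1, hjk, τ, hτ1, hτ2, heq⟩ := surj_main hk hm σ h1 h2 h0
      set x : Fin k := ⟨j - 1, by omega⟩ with hxdef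
      have hxj : x.val + 1 = j := by rw [hxdef]; simp; omega
      refine ⟨⟨x, ⟨τ, hτ1, hτ2⟩⟩, Subtype.ext ?_⟩
      have hstep := bF_congr (k := k) (m := m) (hj1 := by omega)
        (hjk := by have := x.isLt; omega) (hj1' := hj1) (hjk' := hjk) (hm := hm) τ hxj
      exact hstep.trans heq
  have hcard := Nat.card_eq_of_bijective Φ hbij
  have hfk : Nat.card (Fin k) = k := Nat.card_eq_fintype_card.trans (Fintype.card_fin k)
  rw [Nat.card_prod, hfk] at hcard
  exact hcard.symm


end Scratch

/-- For `1 ≤ k < n`, the number of (321,4123)-avoiding permutations of `[n]`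
with the value 1 in position `k` equals `k` times the number of
(321,4123)-avoiding permutations of `[n-k]`. (0-indexed: `σ (k-1) = 0`.) -/
theorem stmt_4 (n k : ℕ) (hk : 1 ≤ k) (hkn : k < n) :
    Nat.card {σ : Equiv.Perm (Fin n) //
        Avoids321 σ ∧ Avoids4123 σ ∧ σ ⟨k - 1, by omega⟩ = ⟨0, by omega⟩} =
      k * Nat.card {σ : Equiv.Perm (Fin (n - k)) // Avoids321 σ ∧ Avoids4123 σ} := by
  obtain ⟨m, rfl⟩ : ∃ m, n = k + m := ⟨n - k, by omega⟩
  have hm : 1 ≤ m := by omega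
  have h1 : k + m - k = m := by omega
  rw [h1]
  exact Scratch.key_count hk hm
end

section
/- For every n ≥ 3, any permutation σ of {1,...,n} avoiding 321 and 4123 satisfies σ^{-1}(n) ∈ {n-2, n-1, n}; that is, the largest entry occupies one of the last three positions. -/
set_option maxHeartbeats 1000000 in
/-- For `n ≥ 3`, the largest entry of a (321,4123)-avoiding permutation of `[n]`
sits in one of the last three positions (0-indexed: `σ⁻¹ (n-1) ≥ n - 3`). -/
theorem stmt_6 (n : ℕ) (hn : 3 ≤ n) (σ : Equiv.Perm (Fin n))
    (h1 : Avoids321 σ) (h2 : Avoids4123 σ) :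
    n - 3 ≤ (σ.symm ⟨n - 1, by omega⟩ : ℕ) := by
  by_contra h
  push_neg at h
  set top : Fin n := ⟨n - 1, by omega⟩ with htop
  set p := σ.symm top with hp
  have hpn : (p : ℕ) < n - 3 := h
  have hσp : σ p = top := σ.apply_symm_apply top
  have hmax : ∀ x : Fin n, x ≠ p → σ x < σ p := by
    intro x hx
    have hne : σ x ≠ σ p := fun hh => hx (σ.injective hh)
    have h1 : (σ x : ℕ) < n := (σ x).isLt
    have h2 : (σ x : ℕ) ≠ n - 1 := by
      intro hv
      apply hne
      rw [hσp]
      exact Fin.ext hv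
    rw [hσp]
    rw [Fin.lt_def]
    simp only [htop]
    omega
  obtain ⟨j, hjv⟩ : ∃ j : Fin n, (j : ℕ) = (p : ℕ) + 1 := ⟨⟨(p : ℕ) + 1, by omega⟩, rfl⟩
  obtain ⟨k, hkv⟩ : ∃ k : Fin n, (k : ℕ) = (p : ℕ) + 2 := ⟨⟨(p : ℕ) + 2, by omega⟩, rfl⟩
  obtain ⟨l, hlv⟩ : ∃ l : Fin n, (l : ℕ) = (p : ℕ) + 3 := ⟨⟨(p : ℕ) + 3, by omega⟩, rfl⟩
  have hpj : p < j := by rw [Fin.lt_def]; omega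
  have hjk : j < k := by rw [Fin.lt_def]; omega
  have hkl : k < l := by rw [Fin.lt_def]; omega
  have hjne : j ≠ p := fun hh => by have := congrArg Fin.val hh; omega
  have hkne : k ≠ p := fun hh => by have := congrArg Fin.val hh; omega
  have hlne : l ≠ p := fun hh => by have := congrArg Fin.val hh; omega
  by_cases hσjk : σ j < σ k
  · by_cases hσkl : σ k < σ l
    · exact h2 ⟨p, j, k, l, hpj, hjk, hkl, hσjk, hσkl, hmax l hlne⟩
    · have hne : σ l ≠ σ k := fun hh => by
        have := σ.injective hh
        rw [this] at hkl
        exact lt_irrefl _ hkl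
      have : σ l < σ k := lt_of_le_of_ne (not_lt.mp hσkl) hne
      exact h1 ⟨p, k, l, lt_trans hpj hjk, hkl, this, hmax k hkne⟩
  · have hne : σ k ≠ σ j := fun hh => by
      have := σ.injective hh
      rw [this] at hjk
      exact lt_irrefl _ hjk
    have : σ k < σ j := lt_of_le_of_ne (not_lt.mp hσjk) hne
    exact h1 ⟨p, j, k, hpj, hjk, this, hmax j hjne⟩
end

section
/- For every n ≥ 1, the only permutation σ of {1,...,n} avoiding 321 and vincular 21-43 with σ(1) = n is σ = n 1 2 ... (n-1). -/
/-- `σ` avoids the vincular pattern 21-43: there are no positions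
`i, i+1, j, k` with `i + 1 < j < k` and `σ (i+1) < σ i < σ k < σ j`. -/
def AvoidsV2143 {n : ℕ} (σ : Equiv.Perm (Fin n)) : Prop :=
  ¬ ∃ (i j k : Fin n) (h : (i : ℕ) + 1 < (j : ℕ)), j < k ∧
      σ ⟨(i : ℕ) + 1, Nat.lt_trans h j.isLt⟩ < σ i ∧ σ i < σ k ∧ σ k < σ j

lemma strictMono_fin_id {m : ℕ} (f : Fin m → Fin m) (hf : StrictMono f) (i : Fin m) :
    f i = i := by
  have hs : Function.Surjective f := Finite.surjective_of_injective hf.injective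
  let e := StrictMono.orderIsoOfSurjective f hf hs
  have he : e = OrderIso.refl (Fin m) := Subsingleton.elim _ _
  have h2 : e i = f i := rfl
  rw [he] at h2; exact h2.symm

lemma rot_inv_succ {m : ℕ} (i : ℕ) (h : i < m) :
    (finRotate (m + 1))⁻¹ ⟨i + 1, by omega⟩ = ⟨i, by omega⟩ := by
  rw [Equiv.Perm.inv_def, Equiv.symm_apply_eq, finRotate_succ_apply]
  apply Fin.ext
  simp only [Fin.val_add]
  have h1 : (1 : Fin (m + 1)).val = 1 % (m + 1) := rfl
  have h2 : 1 % (m + 1) = 1 := Nat.mod_eq_of_lt (by omega)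
  rw [h1, h2, Nat.mod_eq_of_lt (by omega)]

lemma rot_inv_zero {m : ℕ} :
    (finRotate (m + 1))⁻¹ ⟨0, by omega⟩ = ⟨m, by omega⟩ := by
  rw [Equiv.Perm.inv_def, Equiv.symm_apply_eq]
  have : (⟨m, by omega⟩ : Fin (m + 1)) = Fin.last m := rfl
  rw [this, finRotate_last]
  rfl

/-- For `n ≥ 1`, the only (321, vincular 21-43)-avoiding permutation of `[n]`
starting with the value `n` is `n 1 2 ... (n-1)`, i.e. the inverse rotation
`(finRotate n)⁻¹` in 0-indexed form. -/
theorem stmt_9 (n : ℕ) (hn : 1 ≤ n) (σ : Equiv.Perm (Fin n)) :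
    (Avoids321 σ ∧ AvoidsV2143 σ ∧ σ ⟨0, by omega⟩ = ⟨n - 1, by omega⟩) ↔
      σ = (finRotate n)⁻¹ := by
  obtain ⟨m, rfl⟩ : ∃ m, n = m + 1 := ⟨n - 1, by omega⟩
  have hval' : ∀ x : Fin (m + 1), 0 < (x : ℕ) →
      (((finRotate (m + 1))⁻¹ x : Fin (m + 1)) : ℕ) = (x : ℕ) - 1 := by
    intro x hx
    obtain ⟨a, ha⟩ : ∃ a, (x : ℕ) = a + 1 := ⟨(x : ℕ) - 1, by omega⟩
    have hxa : x = ⟨a + 1, by omega⟩ := Fin.ext ha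
    rw [hxa, rot_inv_succ a (by omega)]
    simp [ha]
  -- (finRotate (m+1))⁻¹ is strictly increasing on positions ≥ 1
  have hρmono : ∀ j k : Fin (m + 1), 0 < (j : ℕ) → j < k →
      (finRotate (m + 1))⁻¹ j < (finRotate (m + 1))⁻¹ k := by
    intro j k hj hjk
    have hk : 0 < (k : ℕ) := lt_trans hj (Fin.lt_iff_val_lt_val.mp hjk)
    rw [Fin.lt_iff_val_lt_val, hval' j hj, hval' k hk]
    have := Fin.lt_iff_val_lt_val.mp hjk
    omega
  constructor
  · rintro ⟨h321, _, h0⟩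
    -- σ is strictly increasing on positions ≥ 1
    have hmono : ∀ j k : Fin (m + 1), 0 < (j : ℕ) → j < k → σ j < σ k := by
      intro j k hj hjk
      by_contra hle
      push_neg at hle
      have hne : σ k ≠ σ j := by
        intro h
        have hjk' : j ≠ k := Fin.ne_of_lt hjk
        exact hjk' (σ.injective h).symm
      have hlt : σ k < σ j := lt_of_le_of_ne hle hne
      apply h321
      have hz : (⟨0, by omega⟩ : Fin (m + 1)) < j := Fin.lt_iff_val_lt_val.mpr hj
      have hne0 : σ j ≠ σ ⟨0, by omega⟩ := by
        intro h
        have h' := σ.injective h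
        have : (j : ℕ) = 0 := congrArg Fin.val h'
        omega
      have hlt0 : σ j < σ ⟨0, by omega⟩ := by
        rw [h0] at hne0 ⊢
        have hle' : (σ j : ℕ) < m + 1 := (σ j).isLt
        have hne' : (σ j : ℕ) ≠ m + 1 - 1 := by
          intro h
          exact hne0 (Fin.ext h)
        simp only [Fin.lt_iff_val_lt_val, Fin.val_mk]
        omega
      exact ⟨⟨0, by omega⟩, j, k, hz, hjk, hlt, hlt0⟩
    -- σ ⟨i+1⟩ = ⟨i⟩
    have hval : ∀ i (h : i < m), σ ⟨i + 1, by omega⟩ = ⟨i, by omega⟩ := by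
      have hlt : ∀ i (h : i < m), (σ ⟨i + 1, by omega⟩ : ℕ) < m := by
        intro i h
        have hne0 : σ ⟨i + 1, by omega⟩ ≠ σ ⟨0, by omega⟩ := fun hh => by
          have := σ.injective hh
          simp [Fin.ext_iff] at this
        rw [h0] at hne0
        have h1 : (σ ⟨i + 1, by omega⟩ : ℕ) < m + 1 := (σ _).isLt
        have h2 : (σ ⟨i + 1, by omega⟩ : ℕ) ≠ m := fun hh =>
          hne0 (Fin.ext (by simpa using hh))
        omega
      set f : Fin m → Fin m := fun i => ⟨(σ ⟨(i : ℕ) + 1, by omega⟩ : ℕ), hlt i i.isLt⟩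
        with hfdef
      have hfmono : StrictMono f := by
        intro a b hab
        have := hmono ⟨(a : ℕ) + 1, by omega⟩ ⟨(b : ℕ) + 1, by omega⟩ (by simp)
          (Fin.mk_lt_mk.mpr (by have := Fin.lt_iff_val_lt_val.mp hab; omega))
        exact Fin.mk_lt_mk.mpr (Fin.lt_iff_val_lt_val.mp this)
      intro i h
      have := strictMono_fin_id f hfmono ⟨i, h⟩
      have hv : (σ ⟨i + 1, by omega⟩ : ℕ) = i := by
        have := congrArg Fin.val this
        simpa [hfdef] using this
      exact Fin.ext hv
    ext x
    rcases Nat.eq_zero_or_pos (x : ℕ) with hx | hx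
    · have hx0 : x = ⟨0, by omega⟩ := Fin.ext hx
      have h2 := rot_inv_zero (m := m)
      rw [hx0, h0, h2]
      simp
    · obtain ⟨a, ha⟩ : ∃ a, (x : ℕ) = a + 1 := ⟨(x : ℕ) - 1, by omega⟩
      have hxa : x = ⟨a + 1, by omega⟩ := Fin.ext ha
      have h1 : (σ x : ℕ) = a := by rw [hxa, hval a (by omega)]
      have h2 : (((finRotate (m + 1))⁻¹ x : Fin (m + 1)) : ℕ) = a := by
        rw [hval' x (by omega)]; omega
      exact h1.trans h2.symm
  · rintro rfl
    refine ⟨?_, ?_, ?_⟩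
    · rintro ⟨i, j, k, hij, hjk, h1, _⟩
      exact absurd (hρmono j k (by have := Fin.lt_iff_val_lt_val.mp hij; omega) hjk)
        (not_lt.mpr h1.le)
    · rintro ⟨i, j, k, h, hjk, _, _, h4⟩
      exact absurd (hρmono j k (by omega) hjk) (not_lt.mpr h4.le)
    · exact (rot_inv_zero (m := m)).trans (Fin.ext rfl)
end

section
/- For every n ≥ 1, the number of permutations of {1,...,n} avoiding both the pattern 321 and the pattern 3412 (Boolean permutations) equals the Fibonacci number F_{2n-1}. -/
open List

/-- List-level avoidance of 321 and 3412 (as sublist conditions). -/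
def AvL (l : List ℕ) : Prop :=
  (∀ a b c : ℕ, [a, b, c] <+ l → ¬ (c < b ∧ b < a)) ∧
  (∀ a b c d : ℕ, [a, b, c, d] <+ l → ¬ (c < d ∧ d < a ∧ a < b))

theorem AvL.sublist {l l' : List ℕ} (h : AvL l) (hs : l' <+ l) : AvL l' :=
  ⟨fun a b c hsub => h.1 a b c (hsub.trans hs),
   fun a b c d hsub => h.2 a b c d (hsub.trans hs)⟩

/-- The type of avoiding permutation lists of `{0, …, n-1}`. -/
def TL (n : ℕ) : Type := {l : List ℕ // l ~ range n ∧ AvL l}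

/-- `σ` avoids the pattern 3412: no indices `i < j < k < l` with
`σ k < σ l < σ i < σ j`. -/
def Avoids3412 {n : ℕ} (σ : Equiv.Perm (Fin n)) : Prop :=
  ¬ ∃ i j k l : Fin n, i < j ∧ j < k ∧ k < l ∧ σ k < σ l ∧ σ l < σ i ∧ σ i < σ j

section PermList

variable {n : ℕ}

noncomputable def permToList (σ : Equiv.Perm (Fin n)) : List ℕ :=
  List.ofFn fun i => (σ i : ℕ)

theorem permToList_length (σ : Equiv.Perm (Fin n)) : (permToList σ).length = n := by
  simp [permToList]

theorem permToList_get (σ : Equiv.Perm (Fin n)) (i : Fin (permToList σ).length) :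
    (permToList σ).get i = σ (Fin.cast (by simp [permToList]) i) := by
  exact List.get_ofFn (fun i => (σ i : ℕ)) i

theorem permToList_perm (σ : Equiv.Perm (Fin n)) : permToList σ ~ range n := by
  have hnd : (permToList σ).Nodup := by
    rw [List.nodup_iff_injective_get]
    intro i j hij
    rw [permToList_get, permToList_get] at hij
    have h2 : σ (Fin.cast (by simp [permToList]) i) = σ (Fin.cast (by simp [permToList]) j) :=
      Fin.ext (by exact_mod_cast hij)
    have h3 := σ.injective h2
    exact Fin.ext (by simpa using congrArg Fin.val h3)
  have hsub : permToList σ ⊆ range n := by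
    intro x hx
    rw [permToList, List.mem_ofFn] at hx
    obtain ⟨i, rfl⟩ := hx
    exact List.mem_range.mpr (σ i).isLt
  have h1 : permToList σ <+~ range n := List.subperm_of_subset hnd hsub
  exact h1.perm_of_length_le (by simp [permToList_length])

/-- Transfer of the two avoidance conditions. -/
theorem avoids_iff_avL (σ : Equiv.Perm (Fin n)) :
    (Avoids321 σ ∧ Avoids3412 σ) ↔ AvL (permToList σ) := by
  constructor
  · rintro ⟨h1, h2⟩
    constructor
    · rintro a b c hsub ⟨hcb, hba⟩
      obtain ⟨is, his, hp⟩ := List.sublist_eq_map_getElem hsub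
      match is, his, hp with
      | [i, j, k], his, hp =>
        simp only [List.map, List.cons.injEq, and_true] at his
        have ha : ((σ (Fin.cast (permToList_length σ) i)) : ℕ) = a := by
          rw [his.1, Fin.getElem_fin, ← List.get_eq_getElem, permToList_get]
        have hb : ((σ (Fin.cast (permToList_length σ) j)) : ℕ) = b := by
          rw [his.2.1, Fin.getElem_fin, ← List.get_eq_getElem, permToList_get]
        have hc : ((σ (Fin.cast (permToList_length σ) k)) : ℕ) = c := by
          rw [his.2.2, Fin.getElem_fin, ← List.get_eq_getElem, permToList_get]
        rw [List.pairwise_cons, List.pairwise_cons] at hp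
        have hij : (i : ℕ) < (j : ℕ) := hp.1 j (by simp)
        have hjk : (j : ℕ) < (k : ℕ) := hp.2.1 k (by simp)
        refine h1 ⟨Fin.cast (permToList_length σ) i, Fin.cast (permToList_length σ) j,
          Fin.cast (permToList_length σ) k, ?_, ?_, ?_, ?_⟩ <;>
          rw [Fin.lt_def] <;> (try simp only [Fin.coe_cast]) <;> omega
    · rintro a b c d hsub ⟨h3, h4, h5⟩
      obtain ⟨is, his, hp⟩ := List.sublist_eq_map_getElem hsub
      match is, his, hp with
      | [i, j, k, l], his, hp =>
        simp only [List.map, List.cons.injEq, and_true] at his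
        have ha : ((σ (Fin.cast (permToList_length σ) i)) : ℕ) = a := by
          rw [his.1, Fin.getElem_fin, ← List.get_eq_getElem, permToList_get]
        have hb : ((σ (Fin.cast (permToList_length σ) j)) : ℕ) = b := by
          rw [his.2.1, Fin.getElem_fin, ← List.get_eq_getElem, permToList_get]
        have hc : ((σ (Fin.cast (permToList_length σ) k)) : ℕ) = c := by
          rw [his.2.2.1, Fin.getElem_fin, ← List.get_eq_getElem, permToList_get]
        have hd : ((σ (Fin.cast (permToList_length σ) l)) : ℕ) = d := by
          rw [his.2.2.2, Fin.getElem_fin, ← List.get_eq_getElem, permToList_get]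
        rw [List.pairwise_cons, List.pairwise_cons, List.pairwise_cons] at hp
        have hij : (i : ℕ) < (j : ℕ) := hp.1 j (by simp)
        have hjk : (j : ℕ) < (k : ℕ) := hp.2.1 k (by simp)
        have hkl : (k : ℕ) < (l : ℕ) := hp.2.2.1 l (by simp)
        refine h2 ⟨Fin.cast (permToList_length σ) i, Fin.cast (permToList_length σ) j,
          Fin.cast (permToList_length σ) k, Fin.cast (permToList_length σ) l,
          ?_, ?_, ?_, ?_, ?_, ?_⟩ <;>
          rw [Fin.lt_def] <;> (try simp only [Fin.coe_cast]) <;> omega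
  · rintro hv
    constructor
    · rintro ⟨i, j, k, hij, hjk, h1, h2⟩
      have hlen : n = (permToList σ).length := (permToList_length σ).symm
      have hpw : List.Pairwise (fun x1 x2 : Fin (permToList σ).length => (x1 : ℕ) < (x2 : ℕ))
          [Fin.cast hlen i, Fin.cast hlen j, Fin.cast hlen k] := by
        refine List.Pairwise.cons ?_ (List.Pairwise.cons ?_ (List.pairwise_singleton _ _))
        · intro x hx
          rcases List.mem_cons.mp hx with rfl | hx
          · exact hij
          · rcases List.mem_singleton.mp hx with rfl; exact hij.trans hjk
        · intro x hx
          rcases List.mem_singleton.mp hx with rfl; exact hjk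
      have hsub : [((σ i : ℕ)), (σ j : ℕ), (σ k : ℕ)] <+ permToList σ := by
        have := List.map_getElem_sublist hpw
        simp only [List.map, permToList_get] at this
        convert this using 3 <;> simp only [permToList, Fin.getElem_fin, List.getElem_ofFn] <;> rfl
      exact hv.1 _ _ _ hsub ⟨h1, h2⟩
    · rintro ⟨i, j, k, l, hij, hjk, hkl, h1, h2, h3⟩
      have hlen : n = (permToList σ).length := (permToList_length σ).symm
      have hpw : List.Pairwise (fun x1 x2 : Fin (permToList σ).length => (x1 : ℕ) < (x2 : ℕ))
          [Fin.cast hlen i, Fin.cast hlen j, Fin.cast hlen k, Fin.cast hlen l] := by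
        refine List.Pairwise.cons ?_ (List.Pairwise.cons ?_
          (List.Pairwise.cons ?_ (List.pairwise_singleton _ _)))
        · intro x hx
          rcases List.mem_cons.mp hx with rfl | hx
          · exact hij
          · rcases List.mem_cons.mp hx with rfl | hx
            · exact hij.trans hjk
            · rcases List.mem_singleton.mp hx with rfl; exact (hij.trans hjk).trans hkl
        · intro x hx
          rcases List.mem_cons.mp hx with rfl | hx
          · exact hjk
          · rcases List.mem_singleton.mp hx with rfl; exact hjk.trans hkl
        · intro x hx
          rcases List.mem_singleton.mp hx with rfl; exact hkl
      have hsub : [((σ i : ℕ)), (σ j : ℕ), (σ k : ℕ), (σ l : ℕ)] <+ permToList σ := by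
        have := List.map_getElem_sublist hpw
        simp only [List.map, permToList_get] at this
        convert this using 3 <;> simp only [permToList, Fin.getElem_fin, List.getElem_ofFn] <;> rfl
      exact hv.2 _ _ _ _ hsub ⟨h1, h2, h3⟩

noncomputable def permEquivTL (n : ℕ) :
    {σ : Equiv.Perm (Fin n) // Avoids321 σ ∧ Avoids3412 σ} ≃ TL n := by
  refine Equiv.ofBijective
    (fun σ => ⟨permToList σ.1, permToList_perm σ.1, (avoids_iff_avL σ.1).mp σ.2⟩) ⟨?_, ?_⟩
  · rintro ⟨σ, hσ⟩ ⟨τ, hτ⟩ h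
    have h' : permToList σ = permToList τ := congrArg Subtype.val h
    apply Subtype.ext
    ext i : 1
    have h2 : (permToList σ)[(i : ℕ)]'(by rw [permToList_length]; exact i.isLt)
        = (permToList τ)[(i : ℕ)]'(by rw [permToList_length]; exact i.isLt) := by
      simp only [h']
    simp only [permToList, List.getElem_ofFn] at h2
    exact Fin.ext h2
  · rintro ⟨l, hperm, hav⟩
    have hlen : l.length = n := by simpa using hperm.length_eq
    have hnd : l.Nodup := hperm.nodup_iff.mpr List.nodup_range
    have hmem : ∀ i : Fin n, l.get (Fin.cast hlen.symm i) < n := by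
      intro i
      have : l.get (Fin.cast hlen.symm i) ∈ l := l.get_mem _
      exact List.mem_range.mp (hperm.mem_iff.mp this)
    set f : Fin n → Fin n := fun i => ⟨l.get (Fin.cast hlen.symm i), hmem i⟩ with hf
    have hinj : Function.Injective f := by
      intro i j hij
      have h5 : l.get (Fin.cast hlen.symm i) = l.get (Fin.cast hlen.symm j) :=
        congrArg Fin.val hij
      have h6 := List.nodup_iff_injective_get.mp hnd h5
      have h7 : ((Fin.cast hlen.symm i : Fin l.length) : ℕ)
          = ((Fin.cast hlen.symm j : Fin l.length) : ℕ) := congrArg Fin.val h6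
      simp only [Fin.coe_cast] at h7
      exact Fin.ext h7
    have hlist : permToList (Equiv.ofBijective f ((Finite.injective_iff_bijective).mp hinj)) = l := by
      apply List.ext_get (by simp [permToList_length, hlen])
      intro i h1 h2
      simp [permToList, Equiv.ofBijective, hf]
    refine ⟨⟨Equiv.ofBijective f ((Finite.injective_iff_bijective).mp hinj), ?_⟩, ?_⟩
    · rw [avoids_iff_avL, hlist]; exact hav
    · exact Subtype.ext hlist

end PermList

section Glue

theorem destruct2 {u w : List ℕ} {a b : ℕ} (h : [a, b] = u ++ w) :
    (u = [] ∧ w = [a, b]) ∨ (u = [a] ∧ w = [b]) ∨ (u = [a, b] ∧ w = []) := by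
  rcases u with _ | ⟨a', u⟩
  · exact Or.inl ⟨rfl, h.symm⟩
  simp only [List.cons_append, List.cons.injEq] at h
  obtain ⟨rfl, h⟩ := h
  rcases u with _ | ⟨b', u⟩
  · exact Or.inr (Or.inl ⟨rfl, h.symm⟩)
  simp only [List.cons_append, List.cons.injEq] at h
  obtain ⟨rfl, h⟩ := h
  rcases u with _ | ⟨c', u⟩
  · exact Or.inr (Or.inr ⟨rfl, by simpa using h.symm⟩)
  · simp at h

theorem destruct3 {u w : List ℕ} {a b c : ℕ} (h : [a, b, c] = u ++ w) :
    (u = [] ∧ w = [a, b, c]) ∨ (u = [a] ∧ w = [b, c]) ∨ (u = [a, b] ∧ w = [c]) ∨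
      (u = [a, b, c] ∧ w = []) := by
  rcases u with _ | ⟨a', u⟩
  · exact Or.inl ⟨rfl, h.symm⟩
  simp only [List.cons_append, List.cons.injEq] at h
  obtain ⟨rfl, h⟩ := h
  rcases destruct2 h with ⟨rfl, rfl⟩ | ⟨rfl, rfl⟩ | ⟨rfl, rfl⟩
  · exact Or.inr (Or.inl ⟨rfl, rfl⟩)
  · exact Or.inr (Or.inr (Or.inl ⟨rfl, rfl⟩))
  · exact Or.inr (Or.inr (Or.inr ⟨rfl, rfl⟩))

theorem destruct4 {u w : List ℕ} {a b c d : ℕ} (h : [a, b, c, d] = u ++ w) :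
    (u = [] ∧ w = [a, b, c, d]) ∨ (u = [a] ∧ w = [b, c, d]) ∨ (u = [a, b] ∧ w = [c, d]) ∨
      (u = [a, b, c] ∧ w = [d]) ∨ (u = [a, b, c, d] ∧ w = []) := by
  rcases u with _ | ⟨a', u⟩
  · exact Or.inl ⟨rfl, h.symm⟩
  simp only [List.cons_append, List.cons.injEq] at h
  obtain ⟨rfl, h⟩ := h
  rcases destruct3 h with ⟨rfl, rfl⟩ | ⟨rfl, rfl⟩ | ⟨rfl, rfl⟩ | ⟨rfl, rfl⟩
  · exact Or.inr (Or.inl ⟨rfl, rfl⟩)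
  · exact Or.inr (Or.inr (Or.inl ⟨rfl, rfl⟩))
  · exact Or.inr (Or.inr (Or.inr (Or.inl ⟨rfl, rfl⟩)))
  · exact Or.inr (Or.inr (Or.inr (Or.inr ⟨rfl, rfl⟩)))

theorem sublist_concat_cases {k p : List ℕ} {q : ℕ} (h : k <+ p ++ [q]) :
    k <+ p ∨ ∃ k', k = k' ++ [q] ∧ k' <+ p := by
  rcases List.sublist_append_iff.mp h with ⟨u, v, rfl, hu, hv⟩
  rcases List.sublist_cons_iff.mp hv with hv' | ⟨r, rfl, hr⟩
  · rw [List.sublist_nil] at hv'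
    subst hv'
    exact Or.inl (by simpa using hu)
  · rw [List.sublist_nil] at hr
    subst hr
    exact Or.inr ⟨u, rfl, hu⟩

/-- Gluing lemma: if `p ++ [x]` avoids, so does `(p ++ [T]) ++ x :: R`. -/
theorem avL_extend {p R : List ℕ} {x M T : ℕ}
    (hp : ∀ y ∈ p, y < M) (hx : x < M) (hMT : M ≤ T)
    (hR : ∀ y ∈ R, M ≤ y ∧ y < T) (hRs : R.Pairwise (· < ·))
    (ht : AvL (p ++ [x])) :
    AvL ((p ++ [T]) ++ x :: R) := by
  have hxRs : (x :: R).Pairwise (· < ·) :=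
    List.pairwise_cons.mpr ⟨fun y hy => lt_of_lt_of_le hx (hR y hy).1, hRs⟩
  constructor
  · rintro a b c hsub ⟨h1, h2⟩
    rcases List.sublist_append_iff.mp hsub with ⟨u, w, huw, hu, hw⟩
    have hws : w.Pairwise (· < ·) := List.pairwise_iff_forall_sublist.mpr
      (fun hab => List.pairwise_iff_forall_sublist.mp hxRs (hab.trans hw))
    rcases destruct3 huw with ⟨rfl, rfl⟩ | ⟨rfl, rfl⟩ | ⟨rfl, rfl⟩ | ⟨rfl, rfl⟩
    · rcases hws with _ | ⟨hab, _⟩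
      have := hab b (by simp); omega
    · rcases hws with _ | ⟨hbc, _⟩
      have := hbc c (by simp); omega
    · rcases sublist_concat_cases hu with hu' | ⟨k', hk, hk'⟩
      · have ha : a ∈ p := hu'.subset (by simp)
        have hc : c ∈ x :: R := hw.subset (by simp)
        rcases List.mem_cons.mp hc with rfl | hc
        · exact ht.1 a b c (by simpa using hu'.append (List.Sublist.refl [c])) ⟨h1, h2⟩
        · have := (hR c hc).1
          have := hp a ha
          omega
      · rcases destruct2 hk with ⟨h3, h4⟩ | ⟨h3, h4⟩ | ⟨h3, h4⟩
        · simp at h4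
        · have hb : b = T := by simpa using h4.symm
          subst h3
          have := hp a (hk'.subset (by simp))
          omega
        · simp at h4
    · rcases sublist_concat_cases hu with hu' | ⟨k', hk, hk'⟩
      · exact ht.1 a b c (hu'.trans (List.sublist_append_left p [x])) ⟨h1, h2⟩
      · rcases destruct3 hk with ⟨h3, h4⟩ | ⟨h3, h4⟩ | ⟨h3, h4⟩ | ⟨h3, h4⟩
        · simp at h4
        · simp at h4
        · -- c = T, [a,b] <+ p
          have hc : c = T := by simpa using h4.symm
          subst h3
          have ha : a ∈ p := hk'.subset (by simp)
          have := hp a ha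
          omega
        · simp at h4
  · rintro a b c d hsub ⟨h1, h2, h3⟩
    rcases List.sublist_append_iff.mp hsub with ⟨u, w, huw, hu, hw⟩
    have hws : w.Pairwise (· < ·) := List.pairwise_iff_forall_sublist.mpr
      (fun hab => List.pairwise_iff_forall_sublist.mp hxRs (hab.trans hw))
    rcases destruct4 huw with ⟨rfl, rfl⟩ | ⟨rfl, rfl⟩ | ⟨rfl, rfl⟩ | ⟨rfl, rfl⟩ | ⟨rfl, rfl⟩
    · rcases hws with _ | ⟨hab, _⟩
      have := hab c (by simp); omega
    · rcases hws with _ | ⟨hbc, _⟩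
      have := hbc c (by simp); omega
    · -- u = [a,b], w = [c,d]
      have ha : a ∈ p := by
        rcases sublist_concat_cases hu with hu' | ⟨k', hk, hk'⟩
        · exact hu'.subset (by simp)
        · rcases destruct2 hk with ⟨h4, h5⟩ | ⟨h4, h5⟩ | ⟨h4, h5⟩
          · simp at h5
          · subst h4; exact hk'.subset (by simp)
          · simp at h5
      have hd : d ∈ R := by
        rcases List.sublist_cons_iff.mp hw with hw' | ⟨r, hr, hr'⟩
        · exact hw'.subset (by simp)
        · have hrd : r = [d] := ((by simpa using hr : c = x ∧ [d] = r).2).symm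
          subst hrd
          exact hr'.subset (by simp)
      have := (hR d hd).1
      have := hp a ha
      omega
    · -- u = [a,b,c], w = [d]
      rcases sublist_concat_cases hu with hu' | ⟨k', hk, hk'⟩
      · have ha : a ∈ p := hu'.subset (by simp)
        have hd : d ∈ x :: R := hw.subset (by simp)
        rcases List.mem_cons.mp hd with rfl | hd
        · exact ht.2 a b c d (by simpa using hu'.append (List.Sublist.refl [d])) ⟨h1, h2, h3⟩
        · have := (hR d hd).1
          have := hp a ha
          omega
      · rcases destruct3 hk with ⟨h4, h5⟩ | ⟨h4, h5⟩ | ⟨h4, h5⟩ | ⟨h4, h5⟩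
        · simp at h5
        · simp at h5
        · -- c = T
          have hc : c = T := by simpa using h5.symm
          have hd : d ∈ x :: R := hw.subset (by simp)
          have hdT : d < T := by
            rcases List.mem_cons.mp hd with rfl | hd
            · omega
            · exact (hR d hd).2
          omega
        · simp at h5
    · -- u = [a,b,c,d], w = []
      rcases sublist_concat_cases hu with hu' | ⟨k', hk, hk'⟩
      · exact ht.2 a b c d (hu'.trans (List.sublist_append_left p [x])) ⟨h1, h2, h3⟩
      · rcases destruct4 hk with ⟨h4, h5⟩ | ⟨h4, h5⟩ | ⟨h4, h5⟩ | ⟨h4, h5⟩ | ⟨h4, h5⟩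
        · simp at h5
        · simp at h5
        · simp at h5
        · have hdT : d = T := by simpa using h5.symm
          subst h4
          have ha : a ∈ p := hk'.subset (by simp)
          have := hp a ha
          omega
        · simp at h5

/-- Putting the top element at the end preserves avoidance. -/
theorem avL_concat_top {t : List ℕ} {T : ℕ} (ht : AvL t) (hT : ∀ y ∈ t, y < T) :
    AvL (t ++ [T]) := by
  constructor
  · rintro a b c hsub ⟨h1, h2⟩
    rcases sublist_concat_cases hsub with h | ⟨k', hk, hk'⟩
    · exact ht.1 a b c h ⟨h1, h2⟩
    · rcases destruct3 hk with ⟨h3, h4⟩ | ⟨h3, h4⟩ | ⟨h3, h4⟩ | ⟨h3, h4⟩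
      · simp at h4
      · simp at h4
      · have hc : c = T := by simpa using h4.symm
        subst h3
        have := hT a (hk'.subset (by simp))
        omega
      · simp at h4
  · rintro a b c d hsub ⟨h1, h2, h3⟩
    rcases sublist_concat_cases hsub with h | ⟨k', hk, hk'⟩
    · exact ht.2 a b c d h ⟨h1, h2, h3⟩
    · rcases destruct4 hk with ⟨h4, h5⟩ | ⟨h4, h5⟩ | ⟨h4, h5⟩ | ⟨h4, h5⟩ | ⟨h4, h5⟩
      · simp at h5
      · simp at h5
      · simp at h5
      · have hd : d = T := by simpa using h5.symm
        subst h4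
        have := hT a (hk'.subset (by simp))
        omega
      · simp at h5

end Glue

section Decomp

/-- The gluing construction: from an avoider `t` of `{0,…,M-1}`, produce an avoider of
`{0,…,N}` with the top element `N` placed at position `M-1` (0-indexed). -/
def glue (N M : ℕ) (t : List ℕ) : List ℕ :=
  (t.dropLast ++ [N]) ++ (t.getLastD 0) :: range' M (N - M)

theorem range_succ_split {N M : ℕ} (hMN : M ≤ N) :
    range (N + 1) = (range M ++ range' M (N - M)) ++ [N] := by
  have h1 : M + (N + 1 - M) = N + 1 := by omega
  have h2 := List.range'_append (s := 0) (m := M) (n := N + 1 - M) (step := 1)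
  simp only [Nat.zero_add, Nat.one_mul, Nat.mul_one] at h2
  rw [h1] at h2
  have h3 : range' M (N + 1 - M) = range' M (N - M) ++ [N] := by
    have h4 : N + 1 - M = (N - M) + 1 := by omega
    rw [h4, List.range'_concat]
    congr 2
    omega
  rw [range_eq_range', ← h2, h3, range_eq_range']
  simp [List.append_assoc]

theorem glue_spec {N M : ℕ} {t : List ℕ} (hM : 1 ≤ M) (hMN : M ≤ N)
    (hperm : t ~ range M) (hav : AvL t) :
    glue N M t ~ range (N + 1) ∧ AvL (glue N M t) := by
  have htne : t ≠ [] := by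
    intro h
    have := hperm.length_eq
    simp [h] at this
    omega
  set p := t.dropLast with hp
  set x := t.getLastD 0 with hxdef
  have htx : t = p ++ [x] := by
    conv_lhs => rw [← List.dropLast_append_getLast htne]
    congr 1
    simp [hxdef, List.getLastD_eq_getLast?, List.getLast?_eq_getLast htne]
  have hmemt : ∀ y ∈ t, y < M := fun y hy => List.mem_range.mp (hperm.mem_iff.mp hy)
  have hpm : ∀ y ∈ p, y < M := fun y hy =>
    hmemt y (by rw [htx]; exact List.mem_append_left _ hy)
  have hxm : x < M := hmemt x (by rw [htx]; exact List.mem_append_right _ (by simp))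
  have hR : ∀ y ∈ range' M (N - M), M ≤ y ∧ y < N := by
    intro y hy
    have := List.mem_range'_1.mp hy
    omega
  constructor
  · rw [← Multiset.coe_eq_coe, range_succ_split hMN]
    have hmt : ((range M : List ℕ) : Multiset ℕ) = ↑p + ↑([x] : List ℕ) := by
      have h5 := Multiset.coe_eq_coe.mpr hperm
      rw [htx] at h5
      exact h5.symm
    show (↑p + (↑([N] : List ℕ) : Multiset ℕ)) +
        ((↑([x] : List ℕ) : Multiset ℕ) + ↑(range' M (N - M)))
      = (↑(range M) + (↑(range' M (N - M)) : Multiset ℕ)) + ↑([N] : List ℕ)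
    rw [hmt]
    abel
  · exact avL_extend hpm hxm hMN hR (List.pairwise_lt_range' (s := M) (n := N - M)) (htx ▸ hav)

end Decomp

theorem append_cons_inj {p₁ s₁ p₂ s₂ : List ℕ} {a : ℕ}
    (h : p₁ ++ a :: s₁ = p₂ ++ a :: s₂) (h1 : a ∉ p₁) (h2 : a ∉ p₂) :
    p₁ = p₂ ∧ s₁ = s₂ := by
  induction p₁ generalizing p₂ with
  | nil =>
    rcases p₂ with _ | ⟨b, p₂⟩
    · simpa using h
    · simp only [List.nil_append, List.cons_append, List.cons.injEq] at h
      exact absurd (by simp [h.1]) h2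
  | cons c p₁ ih =>
    rcases p₂ with _ | ⟨b, p₂⟩
    · simp only [List.cons_append, List.nil_append, List.cons.injEq] at h
      exact absurd (by simp [h.1]) h1
    · simp only [List.cons_append, List.cons.injEq] at h
      obtain ⟨rfl, h⟩ := h
      have := ih h (fun hm => h1 (List.mem_cons_of_mem _ hm)) fun hm => h2 (List.mem_cons_of_mem _ hm)
      exact ⟨by rw [this.1], this.2⟩

instance : IsAntisymm ℕ (· < ·) := ⟨fun a b h1 h2 => absurd h1 (by omega)⟩

theorem surj_core {N : ℕ} (l : List ℕ) (hperm : l ~ range (N + 1)) (hav : AvL l) :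
    (∃ t : List ℕ, (t ~ range N ∧ AvL t) ∧ l = t ++ [N]) ∨
    (∃ M t, 1 ≤ M ∧ M ≤ N ∧ (t ~ range M ∧ AvL t) ∧ l = glue N M t) := by
  have hnd : l.Nodup := hperm.nodup_iff.mpr List.nodup_range
  have hmem : ∀ y ∈ l, y < N + 1 := fun y hy => List.mem_range.mp (hperm.mem_iff.mp hy)
  have hNl : N ∈ l := hperm.mem_iff.mpr (List.mem_range.mpr (by omega))
  obtain ⟨p, s, rfl⟩ := List.append_of_mem hNl
  have hnd' : (N :: (p ++ s)).Nodup := List.nodup_middle.mp hnd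
  have hNps : N ∉ p ++ s := (List.nodup_cons.mp hnd').1
  have hndps : (p ++ s).Nodup := (List.nodup_cons.mp hnd').2
  have hNp : N ∉ p := fun h => hNps (List.mem_append_left _ h)
  have hNs : N ∉ s := fun h => hNps (List.mem_append_right _ h)
  have hpN : ∀ y ∈ p, y < N := by
    intro y hy
    have := hmem y (List.mem_append_left _ hy)
    have : y ≠ N := fun h => hNp (h ▸ hy)
    omega
  have hsN : ∀ y ∈ s, y < N := by
    intro y hy
    have := hmem y (List.mem_append_right _ (List.mem_cons_of_mem _ hy))
    have : y ≠ N := fun h => hNs (h ▸ hy)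
    omega
  have hstail : s <+ p ++ N :: s :=
    ((List.sublist_cons_self N s).trans (List.sublist_append_right p _))
  rcases s.eq_nil_or_concat with rfl | hsne
  case inl =>
    left
    refine ⟨p, ⟨?_, hav.sublist (List.sublist_append_left p [N])⟩, rfl⟩
    have h5 := Multiset.coe_eq_coe.mpr hperm
    rw [← Multiset.coe_eq_coe]
    have h6 : ((range (N + 1) : List ℕ) : Multiset ℕ) = ↑(range N) + ↑([N] : List ℕ) := by
      rw [range_succ]; rfl
    rw [h6] at h5
    show (↑p : Multiset ℕ) = ↑(range N)
    have h7 : ((p ++ [N] : List ℕ) : Multiset ℕ) = ↑p + ↑([N] : List ℕ) := rfl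
    rw [h7] at h5
    exact add_right_cancel h5
  case inr =>
    right
    have hsnil : s ≠ [] := by rcases hsne with ⟨l', a, rfl⟩; simp
    set M := p.length + 1 with hM
    -- s is sorted
    have hsnd : s.Nodup := List.Nodup.sublist hstail hnd
    have hssort : s.Pairwise (· < ·) := by
      rw [List.pairwise_iff_forall_sublist]
      intro y z hyz
      have hne : y ≠ z := List.pairwise_iff_forall_sublist.mp hsnd hyz
      by_contra hcon
      have hzy : z < y := by omega
      have hyN : y < N := hsN y (hyz.subset (by simp))
      have hsub : [N, y, z] <+ p ++ N :: s := by
        have := List.Sublist.append (List.nil_sublist p) (hyz.cons₂ N)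
        simpa using this
      exact hav.1 N y z hsub ⟨hzy, hyN⟩
    -- every element of p is < M
    have hfilterlen : ∀ v : ℕ, v ≤ N →
        ((p.filter (· < v)).length + (s.filter (· < v)).length = v) := by
      intro v hv
      have h5 : (p ++ N :: s).filter (· < v) ~ (range (N + 1)).filter (· < v) :=
        hperm.filter _
      have h6 : (range (N + 1)).filter (· < v) = range v := by
        have h7 : range (N + 1) = range v ++ range' v (N + 1 - v) := by
          have h8 := List.range'_append (s := 0) (m := v) (n := N + 1 - v) (step := 1)
          simp only [Nat.zero_add, Nat.one_mul, Nat.mul_one] at h8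
          rw [show v + (N + 1 - v) = N + 1 by omega] at h8
          rw [range_eq_range', ← h8, range_eq_range']
        rw [h7, List.filter_append]
        have h9 : (range v).filter (· < v) = range v :=
          List.filter_eq_self.mpr fun a ha => by
            simpa using List.mem_range.mp ha
        have h10 : (range' v (N + 1 - v)).filter (· < v) = [] :=
          List.filter_eq_nil_iff.mpr fun a ha => by
            have := List.mem_range'_1.mp ha
            simp only [decide_eq_true_eq]
            omega
        rw [h9, h10, List.append_nil]
      have h11 : (p ++ N :: s).filter (· < v) =
          p.filter (· < v) ++ s.filter (· < v) := by
        rw [List.filter_append, List.filter_cons]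
        have : ¬ (N < v) := by omega
        simp [this]
      rw [h11, h6] at h5
      have := h5.length_eq
      simpa using this
    have hpM : ∀ v ∈ p, v < M := by
      intro v hv
      by_contra hcon
      have hvM : M ≤ v := by omega
      have hvN : v < N := hpN v hv
      have hcount := hfilterlen v (by omega)
      have hplen : (p.filter (· < v)).length < p.length :=
        List.length_filter_lt_length_iff_exists.mpr ⟨v, hv, by simp⟩
      have hslen : 2 ≤ (s.filter (· < v)).length := by omega
      set F := s.filter (· < v) with hF
      have hFs : F <+ s := List.filter_sublist (l := s)
      have hFsort : F.Pairwise (· < ·) := List.pairwise_iff_forall_sublist.mpr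
        (fun h => List.pairwise_iff_forall_sublist.mp hssort (h.trans hFs))
      rcases F with _ | ⟨y, F'⟩
      · simp at hslen
      rcases F' with _ | ⟨z, F''⟩
      · simp at hslen
      have hyz : [y, z] <+ s :=
        (List.cons_sublist_cons.mpr (List.cons_sublist_cons.mpr (List.nil_sublist F''))).trans hFs
      have hyv : y < v := by
        have : y ∈ s.filter (· < v) := by rw [← hF]; simp
        simpa using (List.mem_filter.mp this).2
      have hzv : z < v := by
        have : z ∈ s.filter (· < v) := by rw [← hF]; simp
        simpa using (List.mem_filter.mp this).2
      have hyltz : y < z := by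
        rcases hFsort with _ | ⟨hy', _⟩
        exact hy' z (by simp)
      have hsub : [v, N, y, z] <+ p ++ N :: s := by
        have h12 : [v] <+ p := List.singleton_sublist.mpr hv
        have h13 : [N, y, z] <+ N :: s := hyz.cons₂ N
        have := h12.append h13
        simpa using this
      exact hav.2 v N y z hsub ⟨hyltz, hzv, by omega⟩
    have hMN : M ≤ N := by
      have h5 := hperm.length_eq
      simp only [List.length_append, List.length_cons, List.length_range] at h5
      have : 1 ≤ s.length := by
        rcases s with _ | ⟨a, s⟩
        · exact absurd rfl hsnil
        · simp
      omega
    -- the unique small element of s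
    have hcountM := hfilterlen M (by omega)
    have hpMfull : p.filter (· < M) = p := List.filter_eq_self.mpr fun a ha => by
      simpa using hpM a ha
    have hGlen : (s.filter (· < M)).length = 1 := by
      rw [hpMfull] at hcountM
      omega
    obtain ⟨w, hw⟩ : ∃ w, s.filter (· < M) = [w] := by
      rcases hG : s.filter (· < M) with _ | ⟨w, G'⟩
      · rw [hG] at hGlen; simp at hGlen
      · rcases G' with _ | ⟨u, G''⟩
        · exact ⟨w, rfl⟩
        · rw [hG] at hGlen; simp at hGlen
    have hws : w ∈ s := (List.filter_sublist (l := s)).subset (hw ▸ List.mem_singleton_self w)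
    have hwM : w < M := by
      have : w ∈ s.filter (· < M) := hw ▸ List.mem_singleton_self w
      simpa using (List.mem_filter.mp this).2
    -- t := p ++ [w] is a permutation of range M
    have hwp : w ∉ p := by
      intro hcon
      exact (List.disjoint_of_nodup_append hndps) hcon hws
    have htnd : (p ++ [w]).Nodup := by
      have hpnd : p.Nodup := List.Nodup.sublist (List.sublist_append_left p s) hndps
      rw [List.nodup_append]
      exact ⟨hpnd, List.nodup_singleton w, by simpa using fun a (ha : a ∈ p) (h : a = w) => hwp (h ▸ ha)⟩
    have htperm : (p ++ [w]) ~ range M := by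
      have hsubs : (p ++ [w]) ⊆ range M := by
        intro y hy
        rcases List.mem_append.mp hy with hy | hy
        · exact List.mem_range.mpr (hpM y hy)
        · rw [List.mem_singleton] at hy
          subst hy
          exact List.mem_range.mpr hwM
      have hsp := List.subperm_of_subset htnd hsubs
      apply hsp.perm_of_length_le
      simp [hM]
    -- s = w :: range' M (N - M)
    have hseq : s = w :: range' M (N - M) := by
      have hmult : (↑s : Multiset ℕ) = ↑(w :: range' M (N - M) : List ℕ) := by
        have h5 := Multiset.coe_eq_coe.mpr hperm
        rw [range_succ_split hMN] at h5
        have h6 := Multiset.coe_eq_coe.mpr htperm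
        have h7 : ((p ++ N :: s : List ℕ) : Multiset ℕ)
            = ↑p + (↑([N] : List ℕ) + ↑s) := rfl
        have h8 : (((range M ++ range' M (N - M)) ++ [N] : List ℕ) : Multiset ℕ)
            = ↑(range M) + ↑(range' M (N - M)) + ↑([N] : List ℕ) := rfl
        rw [h7, h8, ← h6] at h5
        have h9 : ((p ++ [w] : List ℕ) : Multiset ℕ) = ↑p + ↑([w] : List ℕ) := rfl
        rw [h9] at h5
        rw [show ((↑p : Multiset ℕ) + ↑([w] : List ℕ) + ↑(range' M (N - M)) + ↑([N] : List ℕ))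
          = ↑p + (↑([w] : List ℕ) + ↑(range' M (N - M)) + ↑([N] : List ℕ)) from by abel] at h5
        have h10 : ((w :: range' M (N - M) : List ℕ) : Multiset ℕ)
            = ↑([w] : List ℕ) + ↑(range' M (N - M)) := rfl
        rw [h10]
        have h11 := add_left_cancel h5
        have h12 : (↑([N] : List ℕ) : Multiset ℕ) + ↑s
            = ↑([N] : List ℕ) + (↑([w] : List ℕ) + ↑(range' M (N - M))) := by
          rw [h11]; abel
        exact add_left_cancel h12
      have hperm2 : s ~ w :: range' M (N - M) := Multiset.coe_eq_coe.mp hmult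
      refine List.Perm.eq_of_pairwise (fun a _ b _ h1 h2 => absurd h1 (by omega)) hssort ?_ hperm2
      refine List.pairwise_cons.mpr ⟨?_, List.pairwise_lt_range' (s := M) (n := N - M)⟩
      intro y hy
      have := List.mem_range'_1.mp hy
      omega
    refine ⟨M, p ++ [w], by omega, hMN, ⟨htperm, ?_⟩, ?_⟩
    · apply hav.sublist
      apply List.Sublist.append (List.Sublist.refl p)
      rw [hseq]
      exact List.Sublist.cons N (List.cons_sublist_cons.mpr (List.nil_sublist _))
    · rw [glue, List.dropLast_concat, List.getLastD_concat, hseq]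
      simp

theorem list_eq_dropLast_getLastD {t : List ℕ} (h : t ≠ []) :
    t = t.dropLast ++ [t.getLastD 0] := by
  conv_lhs => rw [← List.dropLast_append_getLast h]
  congr 1
  simp [List.getLastD_eq_getLast?, List.getLast?_eq_getLast h]

theorem TL_ne_nil {M : ℕ} (hM : 1 ≤ M) (t : TL M) : t.1 ≠ [] := by
  intro h
  have := t.2.1.length_eq
  simp [h] at this
  omega

theorem TL_mem_lt {M : ℕ} (t : TL M) : ∀ y ∈ t.1, y < M :=
  fun y hy => List.mem_range.mp (t.2.1.mem_iff.mp hy)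

noncomputable def decompEquiv (N : ℕ) :
    (TL N ⊕ Σ m : Fin N, TL (m.1 + 1)) ≃ TL (N + 1) := by
  refine Equiv.ofBijective (fun d => match d with
    | Sum.inl t => ⟨t.1 ++ [N], by
        rw [range_succ]
        exact t.2.1.append_right [N], avL_concat_top t.2.2 (TL_mem_lt t)⟩
    | Sum.inr ⟨m, t⟩ => ⟨glue N (m.1 + 1) t.1,
        (glue_spec (by omega) (by omega) t.2.1 t.2.2).1,
        (glue_spec (by omega) (by omega) t.2.1 t.2.2).2⟩) ⟨?_, ?_⟩
  · rintro (t₁ | ⟨m₁, t₁⟩) (t₂ | ⟨m₂, t₂⟩) h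
    · have hv : t₁.1 ++ N :: [] = t₂.1 ++ N :: [] := congrArg Subtype.val h
      have hN₁ : N ∉ t₁.1 := fun hc => absurd (TL_mem_lt t₁ N hc) (by omega)
      have hN₂ : N ∉ t₂.1 := fun hc => absurd (TL_mem_lt t₂ N hc) (by omega)
      have := append_cons_inj hv hN₁ hN₂
      rw [Subtype.ext this.1]
    · exfalso
      have hv : t₁.1 ++ N :: [] =
          t₂.1.dropLast ++ N :: (t₂.1.getLastD 0 :: range' (m₂.1 + 1) (N - (m₂.1 + 1))) := by
        have := congrArg Subtype.val h
        simpa [glue] using this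
      have hN₁ : N ∉ t₁.1 := fun hc => absurd (TL_mem_lt t₁ N hc) (by omega)
      have hN₂ : N ∉ t₂.1.dropLast := fun hc => by
        have := TL_mem_lt t₂ N ((List.dropLast_sublist _).subset hc)
        omega
      have := (append_cons_inj hv hN₁ hN₂).2
      simp at this
    · exfalso
      have hv : t₁.1.dropLast ++ N :: (t₁.1.getLastD 0 :: range' (m₁.1 + 1) (N - (m₁.1 + 1)))
          = t₂.1 ++ N :: [] := by
        have := congrArg Subtype.val h
        simpa [glue] using this
      have hN₂ : N ∉ t₂.1 := fun hc => absurd (TL_mem_lt t₂ N hc) (by omega)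
      have hN₁ : N ∉ t₁.1.dropLast := fun hc => by
        have := TL_mem_lt t₁ N ((List.dropLast_sublist _).subset hc)
        omega
      have := (append_cons_inj hv hN₁ hN₂).2
      simp at this
    · have hv : t₁.1.dropLast ++ N :: (t₁.1.getLastD 0 :: range' (m₁.1 + 1) (N - (m₁.1 + 1)))
          = t₂.1.dropLast ++ N :: (t₂.1.getLastD 0 :: range' (m₂.1 + 1) (N - (m₂.1 + 1))) := by
        have := congrArg Subtype.val h
        simpa [glue] using this
      have hN₁ : N ∉ t₁.1.dropLast := fun hc => by
        have := TL_mem_lt t₁ N ((List.dropLast_sublist _).subset hc)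
        omega
      have hN₂ : N ∉ t₂.1.dropLast := fun hc => by
        have := TL_mem_lt t₂ N ((List.dropLast_sublist _).subset hc)
        omega
      obtain ⟨hpp, hss⟩ := append_cons_inj hv hN₁ hN₂
      have hlen₁ : t₁.1.length = m₁.1 + 1 := by simpa using t₁.2.1.length_eq
      have hlen₂ : t₂.1.length = m₂.1 + 1 := by simpa using t₂.2.1.length_eq
      have hm : m₁ = m₂ := by
        apply Fin.ext
        have h₁ : t₁.1.dropLast.length = m₁.1 := by simp [hlen₁]
        have h₂ : t₂.1.dropLast.length = m₂.1 := by simp [hlen₂]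
        rw [← h₁, ← h₂, hpp]
      subst hm
      have hx : t₁.1.getLastD 0 = t₂.1.getLastD 0 := by
        have := congrArg (fun l => l.headI) hss
        simpa using this
      have ht : t₁.1 = t₂.1 := by
        rw [list_eq_dropLast_getLastD (TL_ne_nil (by omega) t₁),
          list_eq_dropLast_getLastD (TL_ne_nil (by omega) t₂), hpp, hx]
      rw [Subtype.ext ht]
  · rintro ⟨l, hp, ha⟩
    rcases surj_core l hp ha with ⟨t, ⟨htp, hta⟩, rfl⟩ | ⟨M, t, hM1, hMN, ⟨htp, hta⟩, rfl⟩
    · exact ⟨Sum.inl ⟨t, htp, hta⟩, rfl⟩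
    · refine ⟨Sum.inr ⟨⟨M - 1, by omega⟩, ⟨t, ?_, hta⟩⟩, ?_⟩
      · rw [show M - 1 + 1 = M from by omega]
        exact htp
      · apply Subtype.ext
        show glue N (M - 1 + 1) t = glue N M t
        rw [show M - 1 + 1 = M from by omega]

noncomputable instance TL_finite (n : ℕ) : Finite (TL n) :=
  Finite.of_equiv _ (permEquivTL n)

theorem nat_card_sigma {k : ℕ} (f : Fin k → Type) [∀ i, Finite (f i)] :
    Nat.card (Σ i, f i) = ∑ i, Nat.card (f i) := by
  haveI : ∀ i, Fintype (f i) := fun i => Fintype.ofFinite _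
  simp only [Nat.card_eq_fintype_card]
  exact Fintype.card_sigma

theorem card_rec (N : ℕ) :
    Nat.card (TL (N + 1)) = Nat.card (TL N) + ∑ m : Fin N, Nat.card (TL (m.1 + 1)) := by
  rw [← Nat.card_congr (decompEquiv N), Nat.card_sum, nat_card_sigma]

theorem TL_card_one : Nat.card (TL 1) = 1 := by
  rw [Nat.card_eq_one_iff_unique]
  constructor
  · constructor
    rintro ⟨l₁, hp₁, _⟩ ⟨l₂, hp₂, _⟩
    have h₁ : l₁ = [0] := List.perm_singleton.mp (by simpa [List.range_succ] using hp₁)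
    have h₂ : l₂ = [0] := List.perm_singleton.mp (by simpa [List.range_succ] using hp₂)
    exact Subtype.ext (h₁.trans h₂.symm)
  · refine ⟨⟨[0], by simp [List.range_succ], ?_, ?_⟩⟩
    · intro a b c hsub _
      have := hsub.length_le
      simp at this
    · intro a b c d hsub _
      have := hsub.length_le
      simp at this

theorem fib_sum (k : ℕ) :
    ∑ m ∈ Finset.range k, Nat.fib (2 * m + 1) = Nat.fib (2 * k) := by
  induction k with
  | zero => simp
  | succ k ih =>
    rw [Finset.sum_range_succ, ih, show 2 * (k + 1) = 2 * k + 2 from by ring,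
      Nat.fib_add_two]

theorem TL_card (n : ℕ) (hn : 1 ≤ n) : Nat.card (TL n) = Nat.fib (2 * n - 1) := by
  induction n using Nat.strong_induction_on with
  | _ n ih =>
    match n, hn with
    | 1, _ => simpa using TL_card_one
    | (N + 2), _ =>
      rw [show N + 2 = (N + 1) + 1 from rfl, card_rec (N + 1)]
      rw [ih (N + 1) (by omega) (by omega)]
      have hsum : ∑ m : Fin (N + 1), Nat.card (TL (m.1 + 1))
          = ∑ m ∈ Finset.range (N + 1), Nat.fib (2 * m + 1) := by
        rw [← Fin.sum_univ_eq_sum_range (fun m => Nat.fib (2 * m + 1)) (N + 1)]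
        apply Finset.sum_congr rfl
        intro m _
        rw [ih (m.1 + 1) (by omega) (by omega),
          show 2 * (m.1 + 1) - 1 = 2 * m.1 + 1 from by omega]
      rw [hsum, fib_sum]
      rw [show 2 * (N + 1) - 1 = 2 * N + 1 from by omega,
        show 2 * (N + 1) = 2 * N + 2 from by omega,
        show 2 * (N + 1 + 1) - 1 = 2 * N + 3 from by omega]
      rw [show 2 * N + 3 = (2 * N + 1) + 2 from by omega, Nat.fib_add_two]
      have h2 : Nat.fib (2 * N + 1 + 1) = Nat.fib (2 * N) + Nat.fib (2 * N + 1) := by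
        rw [show 2 * N + 1 + 1 = 2 * N + 2 from rfl]
        exact Nat.fib_add_two
      have h3 : Nat.fib (2 * N + 1 + 2) = Nat.fib (2 * N + 1) + Nat.fib (2 * N + 1 + 1) :=
        Nat.fib_add_two
      omega

theorem stmt_10 (n : ℕ) (hn : 1 ≤ n) :
    Nat.card {σ : Equiv.Perm (Fin n) // Avoids321 σ ∧ Avoids3412 σ} =
      Nat.fib (2 * n - 1) := by
  rw [Nat.card_congr (permEquivTL n), TL_card n hn]
end

section
/- Let b_{n,k} be the number of permutations σ of {1,...,n} avoiding 321 and 3412 with σ(k) = 1. Then for n > 1, b_{n,1} = b_{n,2} = F_{2n-3}, and for 3 ≤ k ≤ n, b_{n,k} = b_{n-1,k-1}. -/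
/-- `b n k` is the number of (321,3412)-avoiding permutations of `[n]` with the
value `1` in (1-indexed) position `k`. -/
noncomputable def b (n k : ℕ) : ℕ :=
  Nat.card {σ : Equiv.Perm (Fin n) // Avoids321 σ ∧ Avoids3412 σ ∧
    ∃ h : k - 1 < n, (σ ⟨k - 1, h⟩ : ℕ) = 0}

namespace AuxAvoid

open Equiv

variable {n : ℕ}

/-! ### Insertion and deletion of a point of a permutation -/

def insPerm (p v : Fin (n+1)) (τ : Perm (Fin n)) : Perm (Fin (n+1)) :=
  (finSuccEquiv' p).trans (τ.optionCongr.trans (finSuccEquiv' v).symm)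

@[simp] lemma insPerm_self (p v : Fin (n+1)) (τ : Perm (Fin n)) : insPerm p v τ p = v := by
  simp [insPerm, finSuccEquiv'_at, finSuccEquiv'_symm_none]

@[simp] lemma insPerm_succAbove (p v : Fin (n+1)) (τ : Perm (Fin n)) (j : Fin n) :
    insPerm p v τ (p.succAbove j) = v.succAbove (τ j) := by
  simp [insPerm, finSuccEquiv'_succAbove, finSuccEquiv'_symm_some]

def delPerm (p : Fin (n+1)) (σ : Perm (Fin (n+1))) : Perm (Fin n) :=
  Equiv.removeNone ((finSuccEquiv' p).symm.trans (σ.trans (finSuccEquiv' (σ p))))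

lemma delPerm_spec (p : Fin (n+1)) (σ : Perm (Fin (n+1))) (j : Fin n) :
    (σ p).succAbove (delPerm p σ j) = σ (p.succAbove j) := by
  obtain ⟨w, hw⟩ := Fin.exists_succAbove_eq
    (show σ (p.succAbove j) ≠ σ p from fun h => Fin.succAbove_ne p j (σ.injective h))
  have he : ((finSuccEquiv' p).symm.trans (σ.trans (finSuccEquiv' (σ p)))) (some j) = some w := by
    simp [finSuccEquiv'_symm_some, ← hw, finSuccEquiv'_succAbove]
  have h2 := Equiv.removeNone_some _ ⟨w, he⟩
  rw [he] at h2
  have : delPerm p σ j = w := Option.some_injective _ h2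
  rw [this, hw]

lemma del_ins (p v : Fin (n+1)) (τ : Perm (Fin n)) : delPerm p (insPerm p v τ) = τ := by
  apply Equiv.ext; intro j
  apply (Fin.strictMono_succAbove v).injective
  have := delPerm_spec p (insPerm p v τ) j
  rw [insPerm_self] at this
  rw [this, insPerm_succAbove]

lemma ins_del (p : Fin (n+1)) (σ : Perm (Fin (n+1))) : insPerm p (σ p) (delPerm p σ) = σ := by
  apply Equiv.ext; intro x
  rcases eq_or_ne x p with rfl | hx
  · simp
  · obtain ⟨j, rfl⟩ := Fin.exists_succAbove_eq hx
    rw [insPerm_succAbove, delPerm_spec]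

lemma delPerm_lt_iff (p : Fin (n+1)) (σ : Perm (Fin (n+1))) (i j : Fin n) :
    delPerm p σ i < delPerm p σ j ↔ σ (p.succAbove i) < σ (p.succAbove j) := by
  rw [← Fin.succAbove_lt_succAbove_iff (p := σ p), delPerm_spec, delPerm_spec]

/-! ### Safe positions: positions that can never be part of a pattern occurrence -/

def Safe (σ : Perm (Fin (n+1))) (p : Fin (n+1)) : Prop :=
  ((p : ℕ) ≤ 1 ∧ σ p = 0) ∨ (p = 0 ∧ (σ p : ℕ) = 1)

lemma witness321_ne {σ : Perm (Fin (n+1))} {p : Fin (n+1)} (hs : Safe σ p)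
    {i j k : Fin (n+1)} (hij : i < j) (hjk : j < k) (h1 : σ k < σ j) (h2 : σ j < σ i) :
    i ≠ p ∧ j ≠ p ∧ k ≠ p := by
  rcases hs with ⟨hp, h0⟩ | ⟨hp, h0⟩
  · refine ⟨?_, ?_, ?_⟩
    · rintro rfl; rw [h0] at h2; exact absurd h2 (by simp)
    · rintro rfl; rw [h0] at h1; exact absurd h1 (by simp)
    · rintro rfl
      rw [Fin.lt_def] at hij hjk; omega
  · subst hp
    refine ⟨?_, ?_, ?_⟩
    · rintro rfl
      rw [Fin.lt_def] at h1 h2; omega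
    · rintro rfl; exact absurd hij (by simp [Fin.lt_def])
    · rintro rfl; exact absurd hjk (by simp [Fin.lt_def])

lemma witness3412_ne {σ : Perm (Fin (n+1))} {p : Fin (n+1)} (hs : Safe σ p)
    {i j k l : Fin (n+1)} (hij : i < j) (hjk : j < k) (hkl : k < l)
    (h1 : σ k < σ l) (h2 : σ l < σ i) (h3 : σ i < σ j) :
    i ≠ p ∧ j ≠ p ∧ k ≠ p ∧ l ≠ p := by
  rcases hs with ⟨hp, h0⟩ | ⟨hp, h0⟩
  · refine ⟨?_, ?_, ?_, ?_⟩
    · rintro rfl; rw [h0] at h2; exact absurd h2 (by simp)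
    · rintro rfl; rw [h0] at h3; exact absurd h3 (by simp)
    · rintro rfl
      rw [Fin.lt_def] at hij hjk; omega
    · rintro rfl; rw [h0] at h1; exact absurd h1 (by simp)
  · subst hp
    refine ⟨?_, ?_, ?_, ?_⟩
    · rintro rfl
      rw [Fin.lt_def] at h1 h2; omega
    · rintro rfl; exact absurd hij (by simp [Fin.lt_def])
    · rintro rfl; exact absurd (hij.trans hjk) (by simp [Fin.lt_def])
    · rintro rfl; exact absurd ((hij.trans hjk).trans hkl) (by simp [Fin.lt_def])

lemma avoids321_del {σ : Perm (Fin (n+1))} (p : Fin (n+1)) (h : Avoids321 σ) :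
    Avoids321 (delPerm p σ) := by
  rintro ⟨i, j, k, hij, hjk, h1, h2⟩
  exact h ⟨p.succAbove i, p.succAbove j, p.succAbove k,
    Fin.succAbove_lt_succAbove_iff.2 hij, Fin.succAbove_lt_succAbove_iff.2 hjk,
    (delPerm_lt_iff p σ k j).1 h1, (delPerm_lt_iff p σ j i).1 h2⟩

lemma avoids3412_del {σ : Perm (Fin (n+1))} (p : Fin (n+1)) (h : Avoids3412 σ) :
    Avoids3412 (delPerm p σ) := by
  rintro ⟨i, j, k, l, hij, hjk, hkl, h1, h2, h3⟩
  exact h ⟨p.succAbove i, p.succAbove j, p.succAbove k, p.succAbove l,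
    Fin.succAbove_lt_succAbove_iff.2 hij, Fin.succAbove_lt_succAbove_iff.2 hjk,
    Fin.succAbove_lt_succAbove_iff.2 hkl,
    (delPerm_lt_iff p σ k l).1 h1, (delPerm_lt_iff p σ l i).1 h2, (delPerm_lt_iff p σ i j).1 h3⟩

lemma avoids321_of_del {σ : Perm (Fin (n+1))} {p : Fin (n+1)} (hs : Safe σ p)
    (h : Avoids321 (delPerm p σ)) : Avoids321 σ := by
  rintro ⟨i, j, k, hij, hjk, h1, h2⟩
  obtain ⟨hi, hj, hk⟩ := witness321_ne hs hij hjk h1 h2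
  obtain ⟨i', rfl⟩ := Fin.exists_succAbove_eq hi
  obtain ⟨j', rfl⟩ := Fin.exists_succAbove_eq hj
  obtain ⟨k', rfl⟩ := Fin.exists_succAbove_eq hk
  exact h ⟨i', j', k', Fin.succAbove_lt_succAbove_iff.1 hij, Fin.succAbove_lt_succAbove_iff.1 hjk,
    (delPerm_lt_iff p σ k' j').2 h1, (delPerm_lt_iff p σ j' i').2 h2⟩

lemma avoids3412_of_del {σ : Perm (Fin (n+1))} {p : Fin (n+1)} (hs : Safe σ p)
    (h : Avoids3412 (delPerm p σ)) : Avoids3412 σ := by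
  rintro ⟨i, j, k, l, hij, hjk, hkl, h1, h2, h3⟩
  obtain ⟨hi, hj, hk, hl⟩ := witness3412_ne hs hij hjk hkl h1 h2 h3
  obtain ⟨i', rfl⟩ := Fin.exists_succAbove_eq hi
  obtain ⟨j', rfl⟩ := Fin.exists_succAbove_eq hj
  obtain ⟨k', rfl⟩ := Fin.exists_succAbove_eq hk
  obtain ⟨l', rfl⟩ := Fin.exists_succAbove_eq hl
  exact h ⟨i', j', k', l', Fin.succAbove_lt_succAbove_iff.1 hij,
    Fin.succAbove_lt_succAbove_iff.1 hjk, Fin.succAbove_lt_succAbove_iff.1 hkl,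
    (delPerm_lt_iff p σ k' l').2 h1, (delPerm_lt_iff p σ l' i').2 h2,
    (delPerm_lt_iff p σ i' j').2 h3⟩

/-! ### The key structural lemma -/

lemma first_eq_one {σ : Perm (Fin (n+1))} (h1 : Avoids321 σ) (h2 : Avoids3412 σ)
    {p : Fin (n+1)} (hp : 2 ≤ (p : ℕ)) (h0 : σ p = 0) : (σ 0 : ℕ) = 1 := by
  have hn : 2 < n + 1 := lt_of_le_of_lt hp p.isLt
  have h01 : (0 : Fin (n+1)) < 1 := by
    rw [Fin.lt_def, Fin.val_zero, Fin.val_one', Nat.mod_eq_of_lt (by omega)]; omega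
  have h1p : (1 : Fin (n+1)) < p := by
    rw [Fin.lt_def, Fin.val_one', Nat.mod_eq_of_lt (by omega)]; omega
  have h0p : (0 : Fin (n+1)) < p := h01.trans h1p
  by_contra hne
  set r := σ.symm ⟨1, by omega⟩ with hr
  have hσr : σ r = ⟨1, by omega⟩ := σ.apply_symm_apply _
  have hr0 : r ≠ 0 := by
    intro h; rw [h] at hσr; exact hne (by rw [hσr])
  have hrp : r ≠ p := by
    intro h; rw [h, h0] at hσr; exact absurd (congrArg Fin.val hσr) (by simp)
  have hσ0 : 2 ≤ (σ 0 : ℕ) := by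
    have e : σ 0 ≠ 0 := by
      intro h; exact absurd (σ.injective (h.trans h0.symm)) (Fin.ne_of_lt h0p)
    have : (σ 0 : ℕ) ≠ 0 := fun hh => e (Fin.ext hh)
    omega
  rcases lt_trichotomy r p with hlt | heq | hgt
  · have hr0' : (0 : Fin (n+1)) < r :=
      Fin.pos_iff_ne_zero.2 hr0 |>.le.lt_of_ne (by intro h; exact hr0 h.symm)
    exact h1 ⟨0, r, p, hr0', hlt, by rw [h0, hσr, Fin.lt_def]; simp,
      by rw [hσr, Fin.lt_def]; simp; omega⟩
  · exact hrp heq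
  · have hσ1 : 2 ≤ (σ 1 : ℕ) := by
      have e0 : σ 1 ≠ 0 := by
        intro h; exact absurd (σ.injective (h.trans h0.symm)) (Fin.ne_of_lt h1p)
      have e1 : σ 1 ≠ ⟨1, by omega⟩ := by
        intro h
        have : (1 : Fin (n+1)) = r := σ.injective (by rw [hσr, h])
        rw [← this] at hgt; exact absurd (h1p.trans hgt) (lt_irrefl _)
      have v0 : (σ 1 : ℕ) ≠ 0 := fun hh => e0 (Fin.ext hh)
      have v1 : (σ 1 : ℕ) ≠ 1 := fun hh => e1 (Fin.ext hh)
      omega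
    rcases lt_trichotomy (σ 0) (σ 1) with hlt2 | heq2 | hgt2
    · exact h2 ⟨0, 1, p, r, h01, h1p, hgt, by rw [h0, hσr, Fin.lt_def]; simp,
        by rw [hσr, Fin.lt_def]; simp; omega, hlt2⟩
    · exact absurd (σ.injective heq2) (Fin.ne_of_lt h01)
    · exact h1 ⟨0, 1, p, h01, h1p, by rw [h0, Fin.lt_def]; simp; have : ((0 : Fin (n+1)) : ℕ) = 0 := rfl; omega, hgt2⟩

/-! ### Counting -/

noncomputable def A (m : ℕ) : ℕ :=
  Nat.card {σ : Perm (Fin m) // Avoids321 σ ∧ Avoids3412 σ}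

lemma small_avoids {m : ℕ} (hm : m ≤ 2) (σ : Perm (Fin m)) :
    Avoids321 σ ∧ Avoids3412 σ := by
  constructor
  · rintro ⟨i, j, k, hij, hjk, -, -⟩
    rw [Fin.lt_def] at hij hjk
    have := k.isLt; omega
  · rintro ⟨i, j, k, l, hij, hjk, -, -, -, -⟩
    rw [Fin.lt_def] at hij hjk
    have := k.isLt; omega

lemma A_zero : A 0 = 1 := by
  rw [A, Nat.card_congr (Equiv.subtypeUnivEquiv (small_avoids (by norm_num)))]
  simp [Nat.card_eq_fintype_card]

lemma A_one : A 1 = 1 := by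
  rw [A, Nat.card_congr (Equiv.subtypeUnivEquiv (small_avoids (by norm_num)))]
  simp [Nat.card_eq_fintype_card]

lemma cardA (p : Fin (n+1)) (hp : (p : ℕ) ≤ 1) :
    Nat.card {σ : Perm (Fin (n+1)) // Avoids321 σ ∧ Avoids3412 σ ∧ σ p = 0} = A n := by
  apply Nat.card_congr
  refine ⟨fun σ => ⟨delPerm p σ.1, avoids321_del p σ.2.1, avoids3412_del p σ.2.2.1⟩,
    fun τ => ⟨insPerm p 0 τ.1, ?_, ?_, insPerm_self p 0 τ.1⟩, ?_, ?_⟩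
  · exact avoids321_of_del (Or.inl ⟨hp, insPerm_self p 0 τ.1⟩)
      (by rw [del_ins]; exact τ.2.1)
  · exact avoids3412_of_del (Or.inl ⟨hp, insPerm_self p 0 τ.1⟩)
      (by rw [del_ins]; exact τ.2.2)
  · rintro ⟨σ, h1, h2, h3⟩
    apply Subtype.ext
    dsimp only
    rw [← h3]
    exact ins_del p σ
  · intro τ
    apply Subtype.ext
    exact del_ins p 0 τ.1

lemma cardC {m : ℕ} (q : Fin (m+1)) :
    Nat.card {σ : Perm (Fin (m+2)) // Avoids321 σ ∧ Avoids3412 σ ∧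
      (σ 0 : ℕ) = 1 ∧ σ q.succ = 0}
    = Nat.card {τ : Perm (Fin (m+1)) // Avoids321 τ ∧ Avoids3412 τ ∧ τ q = 0} := by
  set v1 : Fin (m+2) := ⟨1, by omega⟩ with hv1
  have hval : ∀ σ : Perm (Fin (m+2)), (σ 0 : ℕ) = 1 ↔ σ 0 = v1 := by
    intro σ; constructor
    · intro h; exact Fin.ext h
    · intro h; rw [h]
  have hsA : v1.succAbove (0 : Fin (m+1)) = 0 := by
    rw [Fin.succAbove_of_castSucc_lt]
    · simp
    · rw [Fin.lt_def]; simp [hv1]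
  apply Nat.card_congr
  refine ⟨fun σ => ⟨delPerm 0 σ.1, avoids321_del _ σ.2.1, avoids3412_del _ σ.2.2.1, ?_⟩,
    fun τ => ⟨insPerm 0 v1 τ.1, ?_, ?_, ?_, ?_⟩, ?_, ?_⟩
  · -- delPerm 0 σ q = 0
    apply (Fin.strictMono_succAbove v1).injective
    have hspec := delPerm_spec 0 σ.1 q
    rw [(hval σ.1).1 σ.2.2.2.1] at hspec
    rw [hspec, hsA, Fin.zero_succAbove, σ.2.2.2.2]
  · exact avoids321_of_del (Or.inr ⟨rfl, by rw [insPerm_self]⟩)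
      (by rw [del_ins]; exact τ.2.1)
  · exact avoids3412_of_del (Or.inr ⟨rfl, by rw [insPerm_self]⟩)
      (by rw [del_ins]; exact τ.2.2.1)
  · rw [insPerm_self]
  · rw [← Fin.zero_succAbove, insPerm_succAbove, τ.2.2.2, hsA]
  · rintro ⟨σ, h1, h2, h3, h4⟩
    apply Subtype.ext
    dsimp only
    rw [show v1 = σ 0 from ((hval σ).1 h3).symm]
    exact ins_del 0 σ
  · intro τ
    apply Subtype.ext
    exact del_ins 0 v1 τ.1

lemma card_sigma_nat {ι : Type*} [Fintype ι] (f : ι → Type*) [∀ i, Finite (f i)] :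
    Nat.card ((i : ι) × f i) = ∑ i, Nat.card (f i) := by
  letI : ∀ i, Fintype (f i) := fun i => Fintype.ofFinite _
  simp [Nat.card_eq_fintype_card, Fintype.card_sigma]

lemma cardPart :
    A (n+1) = ∑ p : Fin (n+1),
      Nat.card {σ : Perm (Fin (n+1)) // Avoids321 σ ∧ Avoids3412 σ ∧ σ p = 0} := by
  rw [← card_sigma_nat]
  apply Nat.card_congr
  refine ⟨fun σ => ⟨σ.1.symm 0, σ.1, σ.2.1, σ.2.2, σ.1.apply_symm_apply 0⟩,
    fun x => ⟨x.2.1, x.2.2.1, x.2.2.2.1⟩, fun σ => rfl, ?_⟩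
  rintro ⟨p, σ, hh1, hh2, hh3⟩
  have : σ.symm 0 = p := by rw [← hh3, Equiv.symm_apply_apply]
  subst this
  rfl

lemma A_rec (m : ℕ) : A (m+2) + A m = 3 * A (m+1) := by
  have hpart2 : A (m+2) = ∑ p : Fin (m+2),
      Nat.card {σ : Perm (Fin (m+2)) // Avoids321 σ ∧ Avoids3412 σ ∧ σ p = 0} :=
    cardPart (n := m+1)
  have hpart1 : A (m+1) = ∑ p : Fin (m+1),
      Nat.card {σ : Perm (Fin (m+1)) // Avoids321 σ ∧ Avoids3412 σ ∧ σ p = 0} :=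
    cardPart (n := m)
  have hc0 : Nat.card {σ : Perm (Fin (m+2)) // Avoids321 σ ∧ Avoids3412 σ ∧ σ 0 = 0}
      = A (m+1) := cardA 0 (by simp)
  have hc1 : Nat.card {σ : Perm (Fin (m+2)) // Avoids321 σ ∧ Avoids3412 σ ∧ σ 1 = 0}
      = A (m+1) := cardA 1 (by rw [Fin.val_one])
  have hd0 : Nat.card {τ : Perm (Fin (m+1)) // Avoids321 τ ∧ Avoids3412 τ ∧ τ 0 = 0}
      = A m := cardA 0 (by simp)
  have hstep : ∀ r : Fin m,
      Nat.card {σ : Perm (Fin (m+2)) // Avoids321 σ ∧ Avoids3412 σ ∧ σ r.succ.succ = 0}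
      = Nat.card {τ : Perm (Fin (m+1)) // Avoids321 τ ∧ Avoids3412 τ ∧ τ r.succ = 0} := by
    intro r
    rw [← cardC (m := m) r.succ]
    apply Nat.card_congr
    apply Equiv.subtypeEquivRight
    intro σ
    constructor
    · rintro ⟨hh1, hh2, hh3⟩
      refine ⟨hh1, hh2, first_eq_one hh1 hh2 ?_ hh3, hh3⟩
      rw [Fin.val_succ, Fin.val_succ]; omega
    · rintro ⟨hh1, hh2, -, hh3⟩
      exact ⟨hh1, hh2, hh3⟩
  have hsum : (∑ r : Fin m, Nat.card {σ : Perm (Fin (m+2)) // Avoids321 σ ∧ Avoids3412 σ ∧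
        σ r.succ.succ = 0})
      = ∑ r : Fin m, Nat.card {τ : Perm (Fin (m+1)) // Avoids321 τ ∧ Avoids3412 τ ∧
        τ r.succ = 0} :=
    Finset.sum_congr rfl (fun r _ => hstep r)
  simp only [Fin.sum_univ_succ, Fin.succ_zero_eq_one] at hpart2 hpart1
  omega

lemma fib_id (j : ℕ) : Nat.fib (j+5) + Nat.fib (j+1) = 3 * Nat.fib (j+3) := by
  have h1 : Nat.fib (j+3) = Nat.fib (j+1) + Nat.fib (j+2) := by
    rw [show j+3 = (j+1)+2 by omega, Nat.fib_add_two, show (j+1)+1 = j+2 by omega]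
  have h2 : Nat.fib (j+4) = Nat.fib (j+2) + Nat.fib (j+3) := by
    rw [show j+4 = (j+2)+2 by omega, Nat.fib_add_two, show (j+2)+1 = j+3 by omega]
  have h3 : Nat.fib (j+5) = Nat.fib (j+3) + Nat.fib (j+4) := by
    rw [show j+5 = (j+3)+2 by omega, Nat.fib_add_two, show (j+3)+1 = j+4 by omega]
  omega

lemma A_fib : ∀ m : ℕ, A (m+1) = Nat.fib (2*m+1) := by
  have key : ∀ m : ℕ, A (m+1) = Nat.fib (2*m+1) ∧ A (m+2) = Nat.fib (2*m+3) := by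
    intro m
    induction m with
    | zero =>
      have h : A 2 + A 0 = 3 * A 1 := A_rec 0
      rw [A_zero, A_one] at h
      have f1 : Nat.fib 1 = 1 := by decide
      have f3 : Nat.fib 3 = 2 := by decide
      constructor
      · norm_num [A_one, f1]
      · norm_num [f3]; omega
    | succ k ih =>
      refine ⟨by rw [show 2*(k+1)+1 = 2*k+3 by ring]; exact ih.2, ?_⟩
      have h : A (k+3) + A (k+1) = 3 * A (k+2) := A_rec (k+1)
      have hf := fib_id (2*k)
      rw [show 2*(k+1)+3 = 2*k+5 by ring]
      show A (k+3) = Nat.fib (2*k+5)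
      have e1 := ih.1
      have e2 := ih.2
      omega
  exact fun m => (key m).1

/-! ### Translation to `b` -/

lemma b_one (m : ℕ) : b (m+2) 1 = A (m+1) := by
  rw [b, ← cardA (n := m+1) 0 (by simp)]
  apply Nat.card_congr
  apply Equiv.subtypeEquivRight
  intro σ
  refine and_congr_right fun _ => and_congr_right fun _ => ?_
  constructor
  · rintro ⟨h, hv⟩
    rw [Fin.mk_zero] at hv
    exact Fin.ext hv
  · intro h
    exact ⟨by omega, by rw [Fin.mk_zero, h]; rfl⟩

lemma b_two (m : ℕ) : b (m+2) 2 = A (m+1) := by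
  rw [b, ← cardA (n := m+1) 1 (by rw [Fin.val_one])]
  apply Nat.card_congr
  apply Equiv.subtypeEquivRight
  intro σ
  refine and_congr_right fun _ => and_congr_right fun _ => ?_
  constructor
  · rintro ⟨h, hv⟩
    rw [Fin.mk_one] at hv
    exact Fin.ext hv
  · intro h
    exact ⟨by omega, by rw [Fin.mk_one, h]; rfl⟩

lemma b_rec (m k : ℕ) (hk3 : 3 ≤ k) (hkn : k ≤ m + 2) : b (m+2) k = b (m+1) (k-1) := by
  have hq : k - 2 < m + 1 := by omega
  set q : Fin (m+1) := ⟨k-2, hq⟩ with hqdef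
  have hqs : (q.succ : ℕ) = k - 1 := by rw [hqdef]; show k - 2 + 1 = k - 1; omega
  rw [b, b]
  calc Nat.card {σ : Perm (Fin (m+2)) // Avoids321 σ ∧ Avoids3412 σ ∧
        ∃ h : k - 1 < m + 2, (σ ⟨k - 1, h⟩ : ℕ) = 0}
      = Nat.card {σ : Perm (Fin (m+2)) // Avoids321 σ ∧ Avoids3412 σ ∧
        (σ 0 : ℕ) = 1 ∧ σ q.succ = 0} := by
        apply Nat.card_congr
        apply Equiv.subtypeEquivRight
        intro σ
        have hmk : (⟨k - 1, by omega⟩ : Fin (m+2)) = q.succ := Fin.ext hqs.symm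
        constructor
        · rintro ⟨h1, h2, h, hv⟩
          have h0 : σ q.succ = 0 := by
            rw [← hmk]; exact Fin.ext hv
          exact ⟨h1, h2, first_eq_one h1 h2 (by rw [hqs]; omega) h0, h0⟩
        · rintro ⟨h1, h2, -, h0⟩
          refine ⟨h1, h2, by omega, ?_⟩
          rw [hmk, h0]; rfl
    _ = Nat.card {τ : Perm (Fin (m+1)) // Avoids321 τ ∧ Avoids3412 τ ∧ τ q = 0} :=
        cardC q
    _ = Nat.card {τ : Perm (Fin (m+1)) // Avoids321 τ ∧ Avoids3412 τ ∧
        ∃ h : k - 1 - 1 < m + 1, (τ ⟨k - 1 - 1, h⟩ : ℕ) = 0} := by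
        apply Nat.card_congr
        apply Equiv.subtypeEquivRight
        intro τ
        have hmk : (⟨k - 1 - 1, by omega⟩ : Fin (m+1)) = q := by
          apply Fin.ext
          rw [hqdef]
          show k - 1 - 1 = k - 2
          omega
        refine and_congr_right fun _ => and_congr_right fun _ => ?_
        constructor
        · intro h0
          exact ⟨by omega, by rw [hmk, h0]; simp⟩
        · rintro ⟨h, hv⟩
          rw [← hmk]; exact Fin.ext hv

end AuxAvoid

theorem stmt_11 :
    (∀ n : ℕ, 1 < n → b n 1 = Nat.fib (2 * n - 3) ∧ b n 2 = Nat.fib (2 * n - 3)) ∧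
    (∀ n k : ℕ, 3 ≤ k → k ≤ n → b n k = b (n - 1) (k - 1)) := by
  constructor
  · intro n hn
    obtain ⟨m, rfl⟩ : ∃ m, n = m + 2 := ⟨n - 2, by omega⟩
    have hfib : Nat.fib (2 * (m+2) - 3) = Nat.fib (2*m+1) := by
      rw [show 2 * (m+2) - 3 = 2*m+1 by omega]
    rw [hfib, AuxAvoid.b_one, AuxAvoid.b_two, AuxAvoid.A_fib]
    exact ⟨rfl, rfl⟩
  · intro n k hk3 hkn
    obtain ⟨m, rfl⟩ : ∃ m, n = m + 2 := ⟨n - 2, by omega⟩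
    have : m + 2 - 1 = m + 1 := rfl
    rw [this]
    exact AuxAvoid.b_rec m k hk3 hkn
end

section
/- For every n ≥ 1, the number of set partitions of {1,...,n} that are simultaneously noncrossing and nonnesting equals the Fibonacci number F_{2n-1}. -/
/-- `i` and `j` lie in the same block of the set partition `P`. -/
def SameBlock {n : ℕ} (P : Finpartition (Finset.univ : Finset (Fin n)))
    (i j : Fin n) : Prop :=
  ∃ b ∈ P.parts, i ∈ b ∧ j ∈ b

/-- `(i, j)` is an arc of the arc diagram of `P`: `i < j` are in the same block
and no element strictly between them lies in that block. -/
def IsArc {n : ℕ} (P : Finpartition (Finset.univ : Finset (Fin n)))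
    (i j : Fin n) : Prop :=
  i < j ∧ SameBlock P i j ∧ ∀ m : Fin n, i < m → m < j → ¬ SameBlock P i m

/-- `P` is noncrossing: no two arcs `(i₁,j₁)`, `(i₂,j₂)` with `i₁<i₂<j₁<j₂`. -/
def Noncrossing {n : ℕ} (P : Finpartition (Finset.univ : Finset (Fin n))) : Prop :=
  ¬ ∃ i₁ j₁ i₂ j₂ : Fin n, IsArc P i₁ j₁ ∧ IsArc P i₂ j₂ ∧
      i₁ < i₂ ∧ i₂ < j₁ ∧ j₁ < j₂

/-- `P` is nonnesting: no two arcs `(i₁,j₁)`, `(i₂,j₂)` with `i₁<i₂<j₂<j₁`. -/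
def Nonnesting {n : ℕ} (P : Finpartition (Finset.univ : Finset (Fin n))) : Prop :=
  ¬ ∃ i₁ j₁ i₂ j₂ : Fin n, IsArc P i₁ j₁ ∧ IsArc P i₂ j₂ ∧
      i₁ < i₂ ∧ i₂ < j₂ ∧ j₂ < j₁


/-- Validity of a gap-string with "previous symbol" `p`: a `2` may only follow a
nonzero symbol. -/
def ValidFrom : ∀ {m : ℕ}, Fin 3 → (Fin m → Fin 3) → Prop
  | 0, _, _ => True
  | _ + 1, p, s => ((s 0 = 2 → p ≠ 0) ∧ ValidFrom (s 0) (Fin.tail s))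

lemma validFrom_cons {m : ℕ} (p c : Fin 3) (t : Fin m → Fin 3) :
    ValidFrom p (Fin.cons c t) ↔ ((c = 2 → p ≠ 0) ∧ ValidFrom c t) := by
  simp [ValidFrom, Fin.tail_cons]

/-- head/tail equivalence for valid strings. -/
def consEquiv (m : ℕ) (p : Fin 3) :
    {s : Fin (m + 1) → Fin 3 // ValidFrom p s} ≃
      Σ c : Fin 3, {t : Fin m → Fin 3 // (c = 2 → p ≠ 0) ∧ ValidFrom c t} where
  toFun s := ⟨s.1 0, Fin.tail s.1, s.2.1, s.2.2⟩
  invFun ct := ⟨Fin.cons ct.1 ct.2.1, (validFrom_cons p ct.1 ct.2.1).2 ct.2.2⟩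
  left_inv s := Subtype.ext (Fin.cons_self_tail s.1)
  right_inv ct := by
    obtain ⟨c, t, h⟩ := ct
    simp
    rfl

noncomputable instance (m : ℕ) (p : Fin 3) :
    Fintype {s : Fin m → Fin 3 // ValidFrom p s} := Fintype.ofFinite _

noncomputable def N0 (m : ℕ) : ℕ := Nat.card {s : Fin m → Fin 3 // ValidFrom 0 s}
noncomputable def N1 (m : ℕ) : ℕ := Nat.card {s : Fin m → Fin 3 // ValidFrom 1 s}

lemma validFrom_one_iff_two {m : ℕ} (s : Fin m → Fin 3) :
    ValidFrom 1 s ↔ ValidFrom 2 s := by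
  cases m with
  | zero => simp [ValidFrom]
  | succ m => simp [ValidFrom]

lemma card_validFrom_succ (m : ℕ) (p : Fin 3) :
    Nat.card {s : Fin (m + 1) → Fin 3 // ValidFrom p s} =
      Nat.card {t : Fin m → Fin 3 // (((0:Fin 3)) = 2 → p ≠ 0) ∧ ValidFrom 0 t} +
      Nat.card {t : Fin m → Fin 3 // (((1:Fin 3)) = 2 → p ≠ 0) ∧ ValidFrom 1 t} +
      Nat.card {t : Fin m → Fin 3 // (((2:Fin 3)) = 2 → p ≠ 0) ∧ ValidFrom 2 t} := by
  rw [Nat.card_congr (consEquiv m p)]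
  classical
  rw [Nat.card_eq_fintype_card, Fintype.card_sigma, Fin.sum_univ_three]
  simp [← Nat.card_eq_fintype_card]

lemma N0_succ (m : ℕ) : N0 (m + 1) = N0 m + N1 m := by
  have h := card_validFrom_succ m 0
  simp only [N0, N1]
  rw [h]
  have h2 : Nat.card {t : Fin m → Fin 3 // (((2:Fin 3)) = 2 → (0:Fin 3) ≠ 0) ∧ ValidFrom 2 t}
      = 0 := by
    rw [Nat.card_eq_zero]
    left
    constructor
    rintro ⟨t, ht, _⟩
    exact ht rfl rfl
  rw [h2]
  have e0 : {t : Fin m → Fin 3 // (((0:Fin 3)) = 2 → (0:Fin 3) ≠ 0) ∧ ValidFrom 0 t}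
      ≃ {t : Fin m → Fin 3 // ValidFrom 0 t} :=
    Equiv.subtypeEquivRight (fun t =>
      ⟨And.right, fun h => ⟨fun h2 => absurd h2 (by decide), h⟩⟩)
  have e1 : {t : Fin m → Fin 3 // (((1:Fin 3)) = 2 → (0:Fin 3) ≠ 0) ∧ ValidFrom 1 t}
      ≃ {t : Fin m → Fin 3 // ValidFrom 1 t} :=
    Equiv.subtypeEquivRight (fun t =>
      ⟨And.right, fun h => ⟨fun h2 => absurd h2 (by decide), h⟩⟩)
  rw [Nat.card_congr e0, Nat.card_congr e1]
  omega

lemma N1_succ (m : ℕ) : N1 (m + 1) = N0 m + 2 * N1 m := by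
  have h := card_validFrom_succ m 1
  simp only [N0, N1]
  rw [h]
  have e0 : {t : Fin m → Fin 3 // (((0:Fin 3)) = 2 → (1:Fin 3) ≠ 0) ∧ ValidFrom 0 t}
      ≃ {t : Fin m → Fin 3 // ValidFrom 0 t} :=
    Equiv.subtypeEquivRight (fun t =>
      ⟨And.right, fun h => ⟨fun h2 => absurd h2 (by decide), h⟩⟩)
  have e1 : {t : Fin m → Fin 3 // (((1:Fin 3)) = 2 → (1:Fin 3) ≠ 0) ∧ ValidFrom 1 t}
      ≃ {t : Fin m → Fin 3 // ValidFrom 1 t} :=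
    Equiv.subtypeEquivRight (fun t =>
      ⟨And.right, fun h => ⟨fun h2 => absurd h2 (by decide), h⟩⟩)
  have e2 : {t : Fin m → Fin 3 // (((2:Fin 3)) = 2 → (1:Fin 3) ≠ 0) ∧ ValidFrom 2 t}
      ≃ {t : Fin m → Fin 3 // ValidFrom 1 t} :=
    Equiv.subtypeEquivRight (fun t =>
      ⟨fun h => (validFrom_one_iff_two t).mpr h.2,
       fun h => ⟨fun _ => by decide, (validFrom_one_iff_two t).mp h⟩⟩)
  rw [Nat.card_congr e0, Nat.card_congr e1, Nat.card_congr e2]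
  ring

lemma N0_N1_fib : ∀ m : ℕ, N0 m = Nat.fib (2 * m + 1) ∧ N1 m = Nat.fib (2 * m + 2) := by
  intro m
  induction m with
  | zero =>
      constructor <;>
      · simp only [N0, N1]
        haveI : Unique {s : Fin 0 → Fin 3 // ValidFrom 0 s} :=
          ⟨⟨⟨Fin.elim0, trivial⟩⟩, by rintro ⟨s, _⟩; apply Subtype.ext; funext x; exact x.elim0⟩
        haveI : Unique {s : Fin 0 → Fin 3 // ValidFrom 1 s} :=
          ⟨⟨⟨Fin.elim0, trivial⟩⟩, by rintro ⟨s, _⟩; apply Subtype.ext; funext x; exact x.elim0⟩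
        simp [Nat.card_unique]
  | succ m ih =>
      obtain ⟨h0, h1⟩ := ih
      have f3 : Nat.fib (2 * m + 3) = Nat.fib (2 * m + 1) + Nat.fib (2 * m + 2) := by
        rw [show 2 * m + 3 = (2 * m + 1) + 2 from by ring, Nat.fib_add_two,
          show 2 * m + 1 + 1 = 2 * m + 2 from by ring]
      have f4 : Nat.fib (2 * m + 4) = Nat.fib (2 * m + 2) + Nat.fib (2 * m + 3) := by
        rw [show 2 * m + 4 = (2 * m + 2) + 2 from by ring, Nat.fib_add_two,
          show 2 * m + 2 + 1 = 2 * m + 3 from by ring]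
      constructor
      · rw [N0_succ, h0, h1, show 2 * (m + 1) + 1 = 2 * m + 3 from by ring, f3]
      · rw [N1_succ, h0, h1, show 2 * (m + 1) + 2 = 2 * m + 4 from by ring, f4, f3]
        ring

namespace NCNN

lemma fin3_cases (x : Fin 3) : x = 0 ∨ x = 1 ∨ x = 2 := by
  fin_cases x <;> simp

variable {n : ℕ}

section basic

variable {P : Finpartition (Finset.univ : Finset (Fin n))}

lemma sameBlock_refl (P : Finpartition (Finset.univ : Finset (Fin n))) (i : Fin n) :
    SameBlock P i i := by
  obtain ⟨b, hb, hib⟩ := P.exists_mem (Finset.mem_univ i)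
  exact ⟨b, hb, hib, hib⟩

lemma sameBlock_symm {i j : Fin n} (h : SameBlock P i j) : SameBlock P j i := by
  obtain ⟨b, hb, h1, h2⟩ := h; exact ⟨b, hb, h2, h1⟩

lemma sameBlock_trans {i j k : Fin n} (h1 : SameBlock P i j) (h2 : SameBlock P j k) :
    SameBlock P i k := by
  obtain ⟨b, hb, hib, hjb⟩ := h1
  obtain ⟨c, hc, hjc, hkc⟩ := h2
  have : b = c := P.eq_of_mem_parts hb hc hjb hjc
  subst this
  exact ⟨b, hb, hib, hkc⟩

lemma mem_part_iff_sameBlock {i j : Fin n} :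
    j ∈ P.part i ↔ SameBlock P i j := by
  constructor
  · intro h
    exact ⟨P.part i, P.part_mem.mpr (Finset.mem_univ i), P.mem_part (Finset.mem_univ i), h⟩
  · rintro ⟨b, hb, hib, hjb⟩
    rwa [P.part_eq_of_mem hb hib]

lemma exists_arc_right {i j : Fin n} (h : SameBlock P i j) (hij : i < j) :
    ∃ m : Fin n, IsArc P i m ∧ m ≤ j := by
  classical
  set T := Finset.univ.filter (fun x : Fin n => i < x ∧ SameBlock P i x) with hT
  have hjT : j ∈ T := by simp [hT, hij, h]
  have hne : T.Nonempty := ⟨j, hjT⟩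
  have hmem := Finset.mem_filter.mp (T.min'_mem hne)
  refine ⟨T.min' hne, ⟨hmem.2.1, hmem.2.2, ?_⟩, T.min'_le j hjT⟩
  intro m him hmlt hsb
  have hmT : m ∈ T := by simp [hT, him, hsb]
  exact absurd (T.min'_le m hmT) (not_le.mpr hmlt)

lemma exists_arc_left {i j : Fin n} (h : SameBlock P i j) (hij : i < j) :
    ∃ p : Fin n, IsArc P p j ∧ i ≤ p := by
  classical
  set T := Finset.univ.filter (fun x : Fin n => x < j ∧ SameBlock P x j) with hT
  have hiT : i ∈ T := by simp [hT, hij, h]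
  have hne : T.Nonempty := ⟨i, hiT⟩
  have hmem := Finset.mem_filter.mp (T.max'_mem hne)
  refine ⟨T.max' hne, ⟨hmem.2.1, hmem.2.2, ?_⟩, T.le_max' i hiT⟩
  intro m hpm hmj hsb
  have : SameBlock P m j := sameBlock_trans (sameBlock_symm hsb) hmem.2.2
  have hmT : m ∈ T := by simp [hT, hmj, this]
  exact absurd (T.le_max' m hmT) (not_le.mpr hpm)

lemma arc_right_unique {i j j' : Fin n} (h : IsArc P i j) (h' : IsArc P i j') : j = j' := by
  rcases lt_trichotomy j j' with hlt | heq | hlt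
  · exact absurd h.2.1 (h'.2.2 j h.1 hlt)
  · exact heq
  · exact absurd h'.2.1 (h.2.2 j' h'.1 hlt)

lemma arc_left_unique {i i' j : Fin n} (h : IsArc P i j) (h' : IsArc P i' j) : i = i' := by
  rcases lt_trichotomy i i' with hlt | heq | hlt
  · have hsb : SameBlock P i i' := sameBlock_trans h.2.1 (sameBlock_symm h'.2.1)
    exact absurd hsb (h.2.2 i' hlt h'.1)
  · exact heq
  · have hsb : SameBlock P i' i := sameBlock_trans h'.2.1 (sameBlock_symm h.2.1)
    exact absurd hsb (h'.2.2 i hlt h.1)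

variable (hNC : Noncrossing P) (hNN : Nonnesting P)
include hNC hNN

lemma arc_nonoverlap {a b c d : Fin n} (h1 : IsArc P a b) (h2 : IsArc P c d)
    (hac : a < c) : b ≤ c := by
  by_contra hcon
  push_neg at hcon
  rcases lt_trichotomy d b with hd | hd | hd
  · exact hNN ⟨a, b, c, d, h1, h2, hac, h2.1, hd⟩
  · subst hd
    exact absurd (arc_left_unique h1 h2) (ne_of_lt hac)
  · exact hNC ⟨a, b, c, d, h1, h2, hac, hcon, hd⟩

lemma no_arc_start_inside {a b c d : Fin n} (h1 : IsArc P a b) (hac : a < c) (hcb : c < b)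
    (h2 : IsArc P c d) : False :=
  absurd (arc_nonoverlap hNC hNN h1 h2 hac) (not_le.mpr hcb)

lemma no_arc_end_inside {a b c d : Fin n} (h1 : IsArc P a b) (hac : a < c) (hcb : c < b)
    (h2 : IsArc P d c) : False := by
  rcases lt_trichotomy d a with h | h | h
  · exact absurd (arc_nonoverlap hNC hNN h2 h1 h) (not_le.mpr hac)
  · subst h
    exact absurd (arc_right_unique h2 h1) (ne_of_lt hcb)
  · have := arc_nonoverlap hNC hNN h1 h2 h
    exact absurd this (not_le.mpr (lt_trans h2.1 hcb))

end basic

section encode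

open Classical in
/-- The gap-string encoding of a partition: value at gap `k` is `2` if `k` is strictly
inside an arc, `1` if an arc starts at `k`, `0` otherwise. -/
noncomputable def encf (P : Finpartition (Finset.univ : Finset (Fin n))) : ℕ → Fin 3 :=
  fun k =>
    if ∃ a b : Fin n, IsArc P a b ∧ a.1 < k ∧ k < b.1 then 2
    else if ∃ a b : Fin n, IsArc P a b ∧ a.1 = k then 1 else 0

variable {P : Finpartition (Finset.univ : Finset (Fin n))}

lemma encf_eq_two_iff {k : ℕ} :
    encf P k = 2 ↔ ∃ a b : Fin n, IsArc P a b ∧ a.1 < k ∧ k < b.1 := by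
  unfold encf
  split_ifs with h1 h2
  · exact iff_of_true rfl h1
  · exact iff_of_false (by decide) h1
  · exact iff_of_false (by decide) h1

lemma encf_eq_one_iff' {k : ℕ} :
    encf P k = 1 ↔ (¬ ∃ a b : Fin n, IsArc P a b ∧ a.1 < k ∧ k < b.1) ∧
      (∃ a b : Fin n, IsArc P a b ∧ a.1 = k) := by
  unfold encf
  split_ifs with h1 h2
  · exact iff_of_false (by decide) (fun h => h.1 h1)
  · exact iff_of_true rfl ⟨h1, h2⟩
  · exact iff_of_false (by decide) (fun h => h2 h.2)

lemma encf_eq_zero_iff {k : ℕ} :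
    encf P k = 0 ↔ (¬ ∃ a b : Fin n, IsArc P a b ∧ a.1 < k ∧ k < b.1) ∧
      (¬ ∃ a b : Fin n, IsArc P a b ∧ a.1 = k) := by
  unfold encf
  split_ifs with h1 h2
  · exact iff_of_false (by decide) (fun h => h.1 h1)
  · exact iff_of_false (by decide) (fun h => h.2 h2)
  · exact iff_of_true rfl ⟨h1, h2⟩

lemma encf_ne_zero_of_start {k : ℕ} (h : ∃ a b : Fin n, IsArc P a b ∧ a.1 = k) :
    encf P k ≠ 0 := by
  rw [Ne, encf_eq_zero_iff]
  exact fun hc => hc.2 h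

lemma encf_eq_zero_of_ge {k : ℕ} (hk : n - 1 ≤ k) : encf P k = 0 := by
  rw [encf_eq_zero_iff]
  constructor
  · rintro ⟨a, b, hab, hak, hkb⟩
    have := b.2
    omega
  · rintro ⟨a, b, hab, hak⟩
    have hb := b.2
    have : a.1 < b.1 := hab.1
    omega

/-- `Rel v i j` : `i` and `j` are consecutive-or-chained block elements according to the
gap-string `v` : `v` is `1` at `i`, not `2` at `j`, and nonzero strictly between. -/
def Rel (v : ℕ → Fin 3) (i j : Fin n) : Prop :=
  i < j ∧ v i.1 = 1 ∧ v j.1 ≠ 2 ∧ ∀ k : ℕ, i.1 < k → k < j.1 → v k ≠ 0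

variable (hNC : Noncrossing P) (hNN : Nonnesting P)
include hNC hNN

lemma encf_eq_one_iff {k : ℕ} :
    encf P k = 1 ↔ ∃ a b : Fin n, IsArc P a b ∧ a.1 = k := by
  rw [encf_eq_one_iff']
  constructor
  · exact fun h => h.2
  · rintro ⟨a, b, hab, rfl⟩
    refine ⟨?_, ⟨a, b, hab, rfl⟩⟩
    rintro ⟨c, d, hcd, hca, had⟩
    exact no_arc_start_inside hNC hNN hcd (by exact hca) (by exact had) hab

lemma encf_ne_two_of_end {j : Fin n} {p : Fin n} (h : IsArc P p j) : encf P j.1 ≠ 2 := by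
  rw [Ne, encf_eq_two_iff]
  rintro ⟨a, b, hab, haj, hjb⟩
  exact no_arc_end_inside hNC hNN hab (by exact haj) (by exact hjb) h

lemma sameBlock_rel : ∀ d : ℕ, ∀ i j : Fin n, j.1 - i.1 ≤ d → i < j → SameBlock P i j →
    Rel (encf P) i j := by
  intro d
  induction d with
  | zero => intro i j hd hij _; exact absurd hij (by omega)
  | succ d ih =>
    intro i j hd hij hsb
    obtain ⟨m, harc, hmj⟩ := exists_arc_right hsb hij
    refine ⟨hij, ?_, ?_, ?_⟩
    · exact (encf_eq_one_iff hNC hNN).mpr ⟨i, m, harc, rfl⟩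
    · obtain ⟨p, hpj, _⟩ := exists_arc_left hsb hij
      exact encf_ne_two_of_end hNC hNN hpj
    · intro k hik hkj
      by_cases hk : k < m.1
      · have : encf P k = 2 := encf_eq_two_iff.mpr ⟨i, m, harc, hik, hk⟩
        rw [this]; decide
      · push_neg at hk
        have hmj' : m < j := by
          rw [Fin.lt_def]; omega
        have hsb2 : SameBlock P m j := sameBlock_trans (sameBlock_symm harc.2.1) hsb
        have hrel := ih m j (by have := harc.1; rw [Fin.lt_def] at this; omega) hmj' hsb2
        rcases eq_or_lt_of_le hk with heq | hlt
        · rw [← heq]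
          rw [hrel.2.1]; decide
        · exact hrel.2.2.2 k hlt hkj

lemma rel_sameBlock : ∀ d : ℕ, ∀ i j : Fin n, j.1 - i.1 ≤ d → Rel (encf P) i j →
    SameBlock P i j := by
  intro d
  induction d with
  | zero => intro i j hd hrel; exact absurd hrel.1 (by omega)
  | succ d ih =>
    intro i j hd hrel
    obtain ⟨hij, h1, h2, hg⟩ := hrel
    obtain ⟨i', m, harc, hi'⟩ := (encf_eq_one_iff hNC hNN (k := i.1)).mp h1
    have : i' = i := Fin.ext hi'
    subst this
    have hmj : m ≤ j := by
      by_contra hcon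
      push_neg at hcon
      exact h2 (encf_eq_two_iff.mpr ⟨_, m, harc, hij, hcon⟩)
    rcases eq_or_lt_of_le hmj with heq | hlt
    · rw [← heq]; exact harc.2.1
    · have him := harc.1
      have hv : encf P m.1 = 1 := by
        have hne0 : encf P m.1 ≠ 0 := hg m.1 him hlt
        have hne2 : encf P m.1 ≠ 2 := encf_ne_two_of_end hNC hNN harc
        rcases fin3_cases (encf P m.1) with h | h | h <;> tauto
      have hrel2 : Rel (encf P) m j :=
        ⟨hlt, hv, h2, fun k hk1 hk2 => hg k (lt_trans him hk1) hk2⟩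
      have : SameBlock P m j := ih m j (by rw [Fin.lt_def] at him hij; omega) hrel2
      exact sameBlock_trans harc.2.1 this

lemma sameBlock_iff_rel (i j : Fin n) :
    SameBlock P i j ↔ (i = j ∨ Rel (encf P) i j ∨ Rel (encf P) j i) := by
  constructor
  · intro h
    rcases lt_trichotomy i j with hij | hij | hij
    · exact Or.inr (Or.inl (sameBlock_rel hNC hNN (j.1 - i.1) i j le_rfl hij h))
    · exact Or.inl hij
    · exact Or.inr (Or.inr (sameBlock_rel hNC hNN (i.1 - j.1) j i le_rfl hij
        (sameBlock_symm h)))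
  · rintro (rfl | h | h)
    · exact sameBlock_refl P i
    · exact rel_sameBlock hNC hNN (j.1 - i.1) i j le_rfl h
    · exact sameBlock_symm (rel_sameBlock hNC hNN (i.1 - j.1) j i le_rfl h)

end encode

lemma finpartition_eq_of_sameBlock {P Q : Finpartition (Finset.univ : Finset (Fin n))}
    (h : ∀ i j : Fin n, SameBlock P i j ↔ SameBlock Q i j) : P = Q := by
  have hpart : ∀ a : Fin n, P.part a = Q.part a := by
    intro a
    ext x
    rw [mem_part_iff_sameBlock, mem_part_iff_sameBlock, h]
  have hparts : P.parts = Q.parts := by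
    ext b
    constructor
    · intro hb
      obtain ⟨a, ha⟩ := P.nonempty_of_mem_parts hb
      have : b = P.part a := (P.part_eq_of_mem hb ha).symm
      rw [this, hpart]
      exact Q.part_mem.mpr (Finset.mem_univ a)
    · intro hb
      obtain ⟨a, ha⟩ := Q.nonempty_of_mem_parts hb
      have : b = Q.part a := (Q.part_eq_of_mem hb ha).symm
      rw [this, ← hpart]
      exact P.part_mem.mpr (Finset.mem_univ a)
  exact Finpartition.ext hparts

section decode

/-- Extend a finite string by `0`. -/
def extF {m : ℕ} (s : Fin m → Fin 3) : ℕ → Fin 3 :=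
  fun k => if h : k < m then s ⟨k, h⟩ else 0

/-- Validity of a gap string: a `2` must have a nonzero left neighbour. -/
def GoodV (v : ℕ → Fin 3) : Prop := ∀ k : ℕ, v k = 2 → 1 ≤ k ∧ v (k - 1) ≠ 0

variable {v : ℕ → Fin 3}

lemma rel_trans1 {i j l : Fin n} (h1 : Rel v i j) (h2 : Rel v j l) : Rel v i l := by
  refine ⟨h1.1.trans h2.1, h1.2.1, h2.2.2.1, ?_⟩
  intro k hk1 hk2
  rcases lt_trichotomy k j.1 with h | h | h
  · exact h1.2.2.2 k hk1 h
  · subst h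
    rw [h2.2.1]; decide
  · exact h2.2.2.2 k h hk2

lemma rel_trans2 {i j l : Fin n} (h1 : Rel v i j) (h2 : Rel v l j) (hil : i < l) :
    Rel v i l := by
  refine ⟨hil, h1.2.1, by rw [h2.2.1]; decide, ?_⟩
  intro k hk1 hk2
  exact h1.2.2.2 k hk1 (by have := h2.1; rw [Fin.lt_def] at this; omega)

lemma rel_trans3 {i j l : Fin n} (h1 : Rel v j i) (h2 : Rel v j l) (hil : i < l) :
    Rel v i l := by
  have hji := h1.1
  have hv : v i.1 = 1 := by
    have hne0 : v i.1 ≠ 0 := h2.2.2.2 i.1 (by rw [Fin.lt_def] at hji; omega)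
      (by rw [Fin.lt_def] at hil; omega)
    have hne2 : v i.1 ≠ 2 := h1.2.2.1
    rcases fin3_cases (v i.1) with h | h | h <;> tauto
  refine ⟨hil, hv, h2.2.2.1, ?_⟩
  intro k hk1 hk2
  exact h2.2.2.2 k (by rw [Fin.lt_def] at hji; omega) hk2

/-- The setoid generated by the arcs of a gap string. -/
def relSetoid (v : ℕ → Fin 3) : Setoid (Fin n) where
  r i j := i = j ∨ Rel v i j ∨ Rel v j i
  iseqv := by
    constructor
    · intro x; exact Or.inl rfl
    · rintro x y (rfl | h | h)
      · exact Or.inl rfl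
      · exact Or.inr (Or.inr h)
      · exact Or.inr (Or.inl h)
    · rintro x y z (rfl | h1 | h1) h2
      · exact h2
      · rcases h2 with rfl | h2 | h2
        · exact Or.inr (Or.inl h1)
        · exact Or.inr (Or.inl (rel_trans1 h1 h2))
        · rcases lt_trichotomy x z with h | h | h
          · exact Or.inr (Or.inl (rel_trans2 h1 h2 h))
          · exact Or.inl h
          · exact Or.inr (Or.inr (rel_trans2 h2 h1 h))
      · rcases h2 with rfl | h2 | h2
        · exact Or.inr (Or.inr h1)
        · rcases lt_trichotomy x z with h | h | h
          · exact Or.inr (Or.inl (rel_trans3 h1 h2 h))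
          · exact Or.inl h
          · exact Or.inr (Or.inr (rel_trans3 h2 h1 h))
        · exact Or.inr (Or.inr (rel_trans1 h2 h1))

/-- The partition decoded from a gap string. -/
noncomputable def decodeP (v : ℕ → Fin 3) : Finpartition (Finset.univ : Finset (Fin n)) :=
  letI : DecidableRel (⇑(relSetoid (n := n) v)) := fun _ _ => Classical.dec _
  Finpartition.ofSetoid (relSetoid v)

lemma sameBlock_decode (v : ℕ → Fin 3) (i j : Fin n) :
    SameBlock (decodeP v) i j ↔ (i = j ∨ Rel v i j ∨ Rel v j i) := by
  rw [← mem_part_iff_sameBlock]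
  letI : DecidableRel (⇑(relSetoid (n := n) v)) := fun _ _ => Classical.dec _
  exact Finpartition.mem_part_ofSetoid_iff_rel

/-- Arcs from the point of view of the string. -/
def ArcS (v : ℕ → Fin 3) (i j : Fin n) : Prop :=
  i < j ∧ v i.1 = 1 ∧ v j.1 ≠ 2 ∧ ∀ k : ℕ, i.1 < k → k < j.1 → v k = 2

lemma isArc_decode_iff (v : ℕ → Fin 3) (i j : Fin n) :
    IsArc (decodeP v) i j ↔ ArcS v i j := by
  constructor
  · rintro ⟨hij, hsb, hmid⟩
    have hrel : Rel v i j := by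
      rcases (sameBlock_decode v i j).mp hsb with rfl | h | h
      · exact absurd hij (lt_irrefl _)
      · exact h
      · exact absurd h.1 (not_lt.mpr hij.le)
    refine ⟨hij, hrel.2.1, hrel.2.2.1, ?_⟩
    intro k hk1 hk2
    have hkn : k < n := lt_trans hk2 j.2
    set m : Fin n := ⟨k, hkn⟩ with hm
    have him : i < m := by rw [Fin.lt_def]; exact hk1
    have hmj : m < j := by rw [Fin.lt_def]; exact hk2
    by_contra hne2
    apply hmid m him hmj
    rw [sameBlock_decode]
    refine Or.inr (Or.inl ⟨him, hrel.2.1, hne2, ?_⟩)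
    intro q hq1 hq2
    exact hrel.2.2.2 q hq1 (lt_trans hq2 hk2)
  · rintro ⟨hij, h1, h2, hg⟩
    have hrel : Rel v i j := ⟨hij, h1, h2, fun k hk1 hk2 => by rw [hg k hk1 hk2]; decide⟩
    refine ⟨hij, (sameBlock_decode v i j).mpr (Or.inr (Or.inl hrel)), ?_⟩
    intro m him hmj hsb
    rcases (sameBlock_decode v i m).mp hsb with rfl | h | h
    · exact absurd him (lt_irrefl _)
    · have := hg m.1 (by rw [Fin.lt_def] at him; exact him) (by rw [Fin.lt_def] at hmj; exact hmj)
      exact h.2.2.1 this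
    · exact absurd h.1 (not_lt.mpr him.le)

lemma decode_no_inner {i1 j1 i2 j2 : Fin n} (hA : IsArc (decodeP v) i1 j1)
    (hB : IsArc (decodeP v) i2 j2) (h12 : i1 < i2) (hlt : i2 < j1) : False := by
  have a1 := (isArc_decode_iff v i1 j1).mp hA
  have a2 := (isArc_decode_iff v i2 j2).mp hB
  have h1 : v i2.1 = 2 := a1.2.2.2 i2.1 (by rw [Fin.lt_def] at h12; exact h12)
    (by rw [Fin.lt_def] at hlt; exact hlt)
  have h2 : v i2.1 = 1 := a2.2.1
  rw [h1] at h2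
  exact absurd h2 (by decide)

lemma decode_noncrossing : Noncrossing (decodeP (n := n) v) := by
  rintro ⟨i1, j1, i2, j2, hA, hB, h1, h2, h3⟩
  exact decode_no_inner hA hB h1 h2

lemma decode_nonnesting : Nonnesting (decodeP (n := n) v) := by
  rintro ⟨i1, j1, i2, j2, hA, hB, h1, h2, h3⟩
  exact decode_no_inner hA hB h1 (lt_trans h2 h3)

lemma left_run (hv : GoodV v) : ∀ k : ℕ, v k = 2 →
    ∃ p : ℕ, p < k ∧ v p = 1 ∧ ∀ q : ℕ, p < q → q ≤ k → v q = 2 := by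
  intro k
  induction k using Nat.strong_induction_on with
  | _ k ih =>
    intro h2
    obtain ⟨hk1, hprev⟩ := hv k h2
    rcases fin3_cases (v (k - 1)) with h0 | h1 | h2'
    · exact absurd h0 hprev
    · refine ⟨k - 1, by omega, h1, ?_⟩
      intro q hq1 hq2
      have : q = k := by omega
      subst this
      exact h2
    · obtain ⟨p, hp, hp1, hrun⟩ := ih (k - 1) (by omega) h2'
      refine ⟨p, by omega, hp1, ?_⟩
      intro q hq1 hq2
      by_cases hq : q ≤ k - 1
      · exact hrun q hq1 hq
      · have : q = k := by omega
        subst this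
        exact h2

open Classical in
lemma right_end (hz : ∀ q : ℕ, n - 1 ≤ q → v q = 0) {k : ℕ} (hk : k < n - 1) :
    ∃ j : ℕ, k < j ∧ j ≤ n - 1 ∧ v j ≠ 2 ∧ ∀ q : ℕ, k < q → q < j → v q = 2 := by
  have hex : ∃ j : ℕ, k < j ∧ v j ≠ 2 := by
    refine ⟨n - 1, hk, ?_⟩
    rw [hz (n - 1) le_rfl]
    decide
  refine ⟨Nat.find hex, (Nat.find_spec hex).1, ?_, (Nat.find_spec hex).2, ?_⟩
  · exact Nat.find_le ⟨hk, by rw [hz (n - 1) le_rfl]; decide⟩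
  · intro q hq1 hq2
    have := Nat.find_min hex hq2
    push_neg at this
    exact this hq1

lemma encf_decode (hv : GoodV v) (hz : ∀ q : ℕ, n - 1 ≤ q → v q = 0) (k : ℕ) :
    encf (decodeP (n := n) v) k = v k := by
  have hlt_of_ne : ∀ q : ℕ, v q ≠ 0 → q < n - 1 := by
    intro q hq
    by_contra hc
    exact hq (hz q (by omega))
  rcases fin3_cases (v k) with h0 | h1 | h2
  · rw [h0]
    apply encf_eq_zero_iff.mpr
    constructor
    · rintro ⟨a, b, hab, hak, hkb⟩
      have := ((isArc_decode_iff v a b).mp hab).2.2.2 k hak hkb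
      rw [this] at h0
      exact absurd h0 (by decide)
    · rintro ⟨a, b, hab, hak⟩
      have := ((isArc_decode_iff v a b).mp hab).2.1
      rw [hak] at this
      rw [this] at h0
      exact absurd h0 (by decide)
  · have hkn : k < n - 1 := hlt_of_ne k (by rw [h1]; decide)
    obtain ⟨j0, hj1, hj2, hj3, hj4⟩ := right_end hz hkn
    have hn2 : 2 ≤ n := by omega
    have harc : IsArc (decodeP (n := n) v) ⟨k, by omega⟩ ⟨j0, by omega⟩ := by
      rw [isArc_decode_iff]
      exact ⟨by rw [Fin.lt_def]; exact hj1, h1, hj3, hj4⟩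
    rw [h1]
    apply encf_eq_one_iff'.mpr
    constructor
    · rintro ⟨a, b, hab, hak, hkb⟩
      have := ((isArc_decode_iff v a b).mp hab).2.2.2 k hak hkb
      rw [this] at h1
      exact absurd h1 (by decide)
    · exact ⟨⟨k, by omega⟩, ⟨j0, by omega⟩, harc, rfl⟩
  · have hkn : k < n - 1 := hlt_of_ne k (by rw [h2]; decide)
    have hn2 : 2 ≤ n := by omega
    obtain ⟨p, hpk, hp1, hrun⟩ := left_run hv k h2
    obtain ⟨j0, hj1, hj2, hj3, hj4⟩ := right_end hz hkn
    have harc : IsArc (decodeP (n := n) v) ⟨p, by omega⟩ ⟨j0, by omega⟩ := by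
      rw [isArc_decode_iff]
      refine ⟨by rw [Fin.lt_def]; simp; omega, hp1, hj3, ?_⟩
      intro q hq1 hq2
      by_cases hq : q ≤ k
      · exact hrun q hq1 hq
      · exact hj4 q (by omega) hq2
    rw [h2]
    exact encf_eq_two_iff.mpr ⟨⟨p, by omega⟩, ⟨j0, by omega⟩, harc, hpk, hj1⟩

end decode

section roundtrip

variable {P : Finpartition (Finset.univ : Finset (Fin n))}

lemma goodV_encf (hNC : Noncrossing P) (hNN : Nonnesting P) : GoodV (encf P) := by
  intro k h2
  obtain ⟨a, b, hab, hak, hkb⟩ := encf_eq_two_iff.mp h2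
  refine ⟨by omega, ?_⟩
  rcases eq_or_lt_of_le (show a.1 ≤ k - 1 by omega) with heq | hlt
  · exact encf_ne_zero_of_start ⟨a, b, hab, heq⟩
  · have : encf P (k - 1) = 2 := encf_eq_two_iff.mpr ⟨a, b, hab, hlt, by omega⟩
    rw [this]
    decide

lemma decode_encf (hNC : Noncrossing P) (hNN : Nonnesting P) : decodeP (encf P) = P := by
  apply finpartition_eq_of_sameBlock
  intro i j
  rw [sameBlock_decode, ← sameBlock_iff_rel hNC hNN]

end roundtrip

section assembly

variable {P : Finpartition (Finset.univ : Finset (Fin n))}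

lemma extF_zero_ge {m : ℕ} (s : Fin m → Fin 3) {q : ℕ} (h : m ≤ q) : extF s q = 0 :=
  dif_neg (by omega)

lemma extF_lt {m : ℕ} (s : Fin m → Fin 3) (k : Fin m) : extF s k.1 = s k := by
  rw [extF, dif_pos k.2]

lemma extF_encode (P : Finpartition (Finset.univ : Finset (Fin n))) :
    extF (fun k : Fin (n - 1) => encf P k.1) = encf P := by
  funext k
  by_cases h : k < n - 1
  · rw [extF, dif_pos h]
  · rw [extF, dif_neg h, encf_eq_zero_of_ge (by omega)]

/-- The main equivalence between noncrossing-nonnesting partitions and valid gap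
strings. -/
noncomputable def mainEquiv (n : ℕ) :
    {P : Finpartition (Finset.univ : Finset (Fin n)) // Noncrossing P ∧ Nonnesting P} ≃
      {s : Fin (n - 1) → Fin 3 // GoodV (extF s)} where
  toFun := fun ⟨P, hP⟩ => ⟨fun k => encf P k.1, by
    rw [extF_encode]
    exact goodV_encf hP.1 hP.2⟩
  invFun := fun ⟨s, _⟩ => ⟨decodeP (extF s), decode_noncrossing, decode_nonnesting⟩
  left_inv := fun ⟨P, hP⟩ => Subtype.ext (by
    simp only
    rw [extF_encode]
    exact decode_encf hP.1 hP.2)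
  right_inv := fun ⟨s, hs⟩ => Subtype.ext (by
    funext k
    simp only
    rw [encf_decode hs (fun q hq => extF_zero_ge s hq) k.1]
    exact extF_lt s k)

/-- Valid strings with previous symbol `p`, in pointwise form over `ℕ`. -/
def GoodF (p : Fin 3) (v : ℕ → Fin 3) : Prop :=
  ∀ k : ℕ, v k = 2 → (if k = 0 then p else v (k - 1)) ≠ 0

lemma goodV_iff_goodF (v : ℕ → Fin 3) : GoodV v ↔ GoodF 0 v := by
  constructor
  · intro h k h2
    obtain ⟨h1, hne⟩ := h k h2
    rw [if_neg (by omega)]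
    exact hne
  · intro h k h2
    have := h k h2
    by_cases hk : k = 0
    · rw [if_pos hk] at this
      exact absurd rfl this
    · rw [if_neg hk] at this
      exact ⟨by omega, this⟩

lemma extF_tail {m : ℕ} (s : Fin (m + 1) → Fin 3) (k : ℕ) :
    extF (Fin.tail s) k = extF s (k + 1) := by
  by_cases h : k < m
  · rw [extF, dif_pos h, extF, dif_pos (by omega)]
    rfl
  · rw [extF, dif_neg h, extF, dif_neg (by omega)]

lemma extF_zero' {m : ℕ} (s : Fin (m + 1) → Fin 3) : extF s 0 = s 0 := by
  rw [extF, dif_pos (by omega)]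
  rfl

lemma goodF_cons {m : ℕ} (p : Fin 3) (s : Fin (m + 1) → Fin 3) :
    GoodF p (extF s) ↔ ((s 0 = 2 → p ≠ 0) ∧ GoodF (s 0) (extF (Fin.tail s))) := by
  constructor
  · intro h
    constructor
    · intro h2
      have := h 0 (by rwa [extF_zero'])
      rwa [if_pos rfl] at this
    · intro k h2
      rw [extF_tail] at h2
      have := h (k + 1) h2
      rw [if_neg (by omega)] at this
      simp only [Nat.add_sub_cancel] at this
      by_cases hk : k = 0
      · subst hk
        rw [if_pos rfl]
        rwa [extF_zero'] at this
      · rw [if_neg hk, extF_tail]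
        rwa [show k - 1 + 1 = k by omega]
  · rintro ⟨h0, ht⟩ k h2
    by_cases hk : k = 0
    · subst hk
      rw [extF_zero'] at h2
      rw [if_pos rfl]
      exact h0 h2
    · rw [if_neg hk]
      have h2' : extF (Fin.tail s) (k - 1) = 2 := by
        rw [extF_tail, show k - 1 + 1 = k by omega]
        exact h2
      have := ht (k - 1) h2'
      by_cases hk1 : k - 1 = 0
      · rw [if_pos hk1] at this
        rw [show k - 1 = 0 from hk1, extF_zero']
        exact this
      · rw [if_neg hk1] at this
        rw [extF_tail, show k - 1 - 1 + 1 = k - 1 by omega] at this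
        · exact this
  
lemma goodF_iff_validFrom : ∀ {m : ℕ} (p : Fin 3) (s : Fin m → Fin 3),
    GoodF p (extF s) ↔ ValidFrom p s := by
  intro m
  induction m with
  | zero =>
    intro p s
    constructor
    · intro _; trivial
    · intro _ k h2
      rw [extF, dif_neg (by omega)] at h2
      exact absurd h2 (by decide)
  | succ m ih =>
    intro p s
    rw [goodF_cons]
    constructor
    · rintro ⟨h0, ht⟩
      exact ⟨h0, (ih (s 0) (Fin.tail s)).mp ht⟩
    · rintro ⟨h0, ht⟩
      exact ⟨h0, (ih (s 0) (Fin.tail s)).mpr ht⟩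

lemma goodV_iff_validFrom {m : ℕ} (s : Fin m → Fin 3) :
    GoodV (extF s) ↔ ValidFrom 0 s :=
  (goodV_iff_goodF (extF s)).trans (goodF_iff_validFrom 0 s)

end assembly

end NCNN

theorem stmt_13 (n : ℕ) (hn : 1 ≤ n) :
    Nat.card {P : Finpartition (Finset.univ : Finset (Fin n)) //
        Noncrossing P ∧ Nonnesting P} = Nat.fib (2 * n - 1) := by
  rw [Nat.card_congr (NCNN.mainEquiv n)]
  rw [Nat.card_congr (Equiv.subtypeEquivRight (fun s => NCNN.goodV_iff_validFrom s))]
  have h := (N0_N1_fib (n - 1)).1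
  rw [show Nat.card {s : Fin (n - 1) → Fin 3 // ValidFrom 0 s} = N0 (n - 1) from rfl, h]
  congr 1
  omega
end
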